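/- arXiv:1211.4816 — 3 statements merged into one kernel-verified Lean document; each statement's English description precedes it below -/
import Mathlib

section
/- Suppose Σ_{n≥1} |ρ(n)| < ∞ and m := Σ_{n≥1} n K(n) < ∞. Then for every β ≥ 0 and every h ∈ ℝ, liminf_{n→∞} (1/n) log Z^{free}_n(β,h) ≥ (1/m) ( h + (β²/2)(1 + 2 Σ_{n≥1} ρ(n) u(n)) ). In particular, if h > −(β²/2)(1 + 2 Σ_{n≥1} ρ(n) u(n)) then liminf_{n→∞} (1/n) log Z^{free}_n(β,h) > 0. -/
open Real Filter Finset

noncomputable def annWeight (K ρ : ℕ → ℝ) (β h : ℝ) {m : ℕ} (c : Composition m) : ℝ :=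
  Real.exp ((c.length : ℝ) * (h + β ^ 2 / 2)
      + β ^ 2 * ∑ i : Fin c.length, ∑ j : Fin c.length,
          if (i : ℕ) < (j : ℕ) then
            ρ (c.sizeUpTo ((j : ℕ) + 1) - c.sizeUpTo ((i : ℕ) + 1)) else 0)
    * ∏ i : Fin c.length, K (c.blocksFun i)

/-- The annealed partition function `Z_n(β,h)`: the sum over `k ≥ 1` and tuples
`(l_1,…,l_k)` of positive integers with `l_1+⋯+l_k = n` (i.e. compositions of `n`) of
`exp(k(h+β²/2) + β² Σ_{1≤i<j≤k} ρ(τ_j − τ_i)) ∏ K(l_i)`, where `τ_i = l_1+⋯+l_i`. -/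
noncomputable def Zann (K ρ : ℕ → ℝ) (β h : ℝ) (n : ℕ) : ℝ :=
  ∑ c : Composition n, annWeight K ρ β h c

/-- The renewal mass function: `u(0) = 1`, `u(n) = Σ_{k=1}^{n} K(k) u(n−k)`,
so that `u(n) = P(n ∈ τ)`. -/
noncomputable def renewalMass (K : ℕ → ℝ) : ℕ → ℝ
  | 0 => 1
  | n + 1 => ∑ k ∈ Finset.range (n + 1), K (k + 1) * renewalMass K (n - k)

/-- Tail of `K`: `Σ_{l > r} K(l)`. -/
noncomputable def tailK (K : ℕ → ℝ) (r : ℕ) : ℝ := ∑' l : ℕ, K (r + 1 + l)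

/-- The free annealed partition function: summing over `k ≥ 0` and renewal points
`0 < t_1 < ⋯ < t_k ≤ n` (grouped by `m = t_k`, the renewal points in `[1,m]` being
parametrized by compositions of `m`), with tail factor `Σ_{l > n−t_k} K(l)`,
and the `k = 0` term equal to `Σ_{l > n} K(l)`. -/
noncomputable def Zfree (K ρ : ℕ → ℝ) (β h : ℝ) (n : ℕ) : ℝ :=
  tailK K n + ∑ m ∈ Finset.Icc 1 n, Zann K ρ β h m * tailK K (n - m)

namespace FELB
open Topology

/-- Append a final block to a composition, targeting a given total `n`. -/
def snocTo (n : ℕ) {k : ℕ} (hk : k < n) (c : Composition k) : Composition n where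
  blocks := c.blocks ++ [n - k]
  blocks_pos := by
    intro i hi
    rcases List.mem_append.1 hi with h | h
    · exact c.blocks_pos h
    · simp only [List.mem_singleton] at h
      omega
  blocks_sum := by
    simp [c.blocks_sum]
    omega

lemma length_snocTo (n : ℕ) {k : ℕ} (hk : k < n) (c : Composition k) :
    (snocTo n hk c).length = c.length + 1 := by
  simp [snocTo, Composition.length]

lemma sizeUpTo_snocTo_of_le (n : ℕ) {k : ℕ} (hk : k < n) (c : Composition k)
    {m : ℕ} (hm : m ≤ c.length) :
    (snocTo n hk c).sizeUpTo m = c.sizeUpTo m := by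
  simp only [Composition.sizeUpTo, snocTo]
  rw [List.take_append_of_le_length hm]

lemma comp_zero_blocks (c : Composition 0) : c.blocks = [] := by
  rcases hb : c.blocks with _ | ⟨a, l⟩
  · rfl
  · exfalso
    have hs := c.blocks_sum
    rw [hb] at hs
    have ha : 0 < a := c.blocks_pos (by simp [hb])
    simp [List.sum_cons] at hs
    omega

lemma comp_zero_length (c : Composition 0) : c.length = 0 := by
  simp [Composition.length, comp_zero_blocks c]

instance : Unique (Composition 0) where
  default := ⟨[], by simp, by simp⟩
  uniq c := Composition.ext (by simp [comp_zero_blocks c])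

/-- Last-block decomposition of sums over compositions. -/
lemma sum_comp_decomp {n : ℕ} (hn : 0 < n) (F : Composition n → ℝ) :
    ∑ c : Composition n, F c
      = ∑ k : Fin n, ∑ c : Composition (k : ℕ), F (snocTo n k.isLt c) := by
  have hbij : Function.Bijective
      (fun p : Σ k : Fin n, Composition (k : ℕ) => snocTo n p.1.isLt p.2) := by
    constructor
    · rintro ⟨k₁, c₁⟩ ⟨k₂, c₂⟩ hEq
      have hb : c₁.blocks ++ [n - k₁] = c₂.blocks ++ [n - k₂] := congrArg Composition.blocks hEq
      have h2 := List.append_inj' hb (by simp)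
      have hk : (k₁ : ℕ) = (k₂ : ℕ) := by
        rw [← c₁.blocks_sum, ← c₂.blocks_sum, h2.1]
      rcases k₁ with ⟨k₁, hk₁⟩; rcases k₂ with ⟨k₂, hk₂⟩
      simp only at hk
      subst hk
      simp only [Sigma.mk.inj_iff, heq_eq_eq, true_and]
      exact Composition.ext h2.1
    · intro c
      have hne : c.blocks ≠ [] := by
        intro h
        have := c.blocks_sum
        rw [h] at this
        simp at this
        omega
      set a := c.blocks.getLast hne with ha
      have hdec : c.blocks.dropLast ++ [a] = c.blocks := List.dropLast_append_getLast hne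
      have hapos : 0 < a := c.blocks_pos (ha ▸ List.getLast_mem hne)
      have hsum : c.blocks.dropLast.sum + a = n := by
        conv_rhs => rw [← c.blocks_sum, ← hdec]
        simp
      have hklt : c.blocks.dropLast.sum < n := by omega
      refine ⟨⟨⟨c.blocks.dropLast.sum, hklt⟩,
        ⟨c.blocks.dropLast, ?_, rfl⟩⟩, ?_⟩
      · intro i hi
        exact c.blocks_pos (List.mem_of_mem_dropLast hi)
      · apply Composition.ext
        show c.blocks.dropLast ++ [n - c.blocks.dropLast.sum] = c.blocks
        rw [show n - c.blocks.dropLast.sum = a by omega]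
        exact hdec
  calc ∑ c : Composition n, F c
      = ∑ p : Σ k : Fin n, Composition (k : ℕ), F (snocTo n p.1.isLt p.2) :=
        (Fintype.sum_bijective _ hbij _ F (fun _ => rfl)).symm
    _ = ∑ k : Fin n, ∑ c : Composition (k : ℕ), F (snocTo n k.isLt c) := by
        rw [Finset.sum_sigma']
        rfl


lemma blocks_snocTo (n : ℕ) {k : ℕ} (hk : k < n) (c : Composition k) :
    (snocTo n hk c).blocks = c.blocks ++ [n - k] := rfl

variable (K ρ : ℕ → ℝ)


/-- product of `K` over blocks -/
def Pw {m : ℕ} (c : Composition m) : ℝ := ∏ i : Fin c.length, K (c.blocksFun i)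

/-- sum of `ρ` over pairs of renewal points -/
def pairS {m : ℕ} (c : Composition m) : ℝ :=
  ∑ i : Fin c.length, ∑ j : Fin c.length,
    if (i : ℕ) < (j : ℕ) then
      ρ (c.sizeUpTo ((j : ℕ) + 1) - c.sizeUpTo ((i : ℕ) + 1)) else 0

/-- sum of `ρ (a + (m - t))` over renewal points `t` -/
def ptS (a : ℕ) {m : ℕ} (c : Composition m) : ℝ :=
  ∑ i : Fin c.length, ρ (a + (m - c.sizeUpTo ((i : ℕ) + 1)))

lemma Pw_eq_list {m : ℕ} (c : Composition m) : Pw K c = (c.blocks.map K).prod := by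
  rw [Pw, ← Composition.ofFn_blocksFun c, List.map_ofFn, List.prod_ofFn]
  rfl

lemma Pw_snocTo (n : ℕ) {k : ℕ} (hk : k < n) (c : Composition k) :
    Pw K (snocTo n hk c) = K (n - k) * Pw K c := by
  rw [Pw_eq_list, Pw_eq_list, blocks_snocTo]
  simp [mul_comm]

lemma ptS_range (a : ℕ) {m : ℕ} (c : Composition m) :
    ptS ρ a c = ∑ i ∈ range c.length, ρ (a + (m - c.sizeUpTo (i + 1))) := by
  rw [ptS]
  exact Fin.sum_univ_eq_sum_range (fun i => ρ (a + (m - c.sizeUpTo (i + 1)))) c.length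

lemma pairS_range {m : ℕ} (c : Composition m) :
    pairS ρ c = ∑ i ∈ range c.length, ∑ j ∈ range c.length,
      (if i < j then ρ (c.sizeUpTo (j + 1) - c.sizeUpTo (i + 1)) else 0) := by
  rw [pairS,
    Fin.sum_univ_eq_sum_range
      (fun i => ∑ j : Fin c.length, if i < (j : ℕ) then
        ρ (c.sizeUpTo ((j : ℕ) + 1) - c.sizeUpTo (i + 1)) else 0) c.length]
  exact Finset.sum_congr rfl fun i _ =>
    Fin.sum_univ_eq_sum_range
      (fun j => if i < j then ρ (c.sizeUpTo (j + 1) - c.sizeUpTo (i + 1)) else 0) c.length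

lemma ptS_snocTo (n : ℕ) {k : ℕ} (hk : k < n) (c : Composition k) (a : ℕ) :
    ptS ρ a (snocTo n hk c) = ρ a + ptS ρ (a + (n - k)) c := by
  rw [ptS_range, ptS_range, length_snocTo, Finset.sum_range_succ]
  have hlast : (snocTo n hk c).sizeUpTo (c.length + 1) = n := by
    have := (snocTo n hk c).sizeUpTo_length
    rwa [length_snocTo] at this
  rw [hlast]
  simp only [Nat.sub_self, Nat.add_zero]
  rw [add_comm (∑ i ∈ range c.length, _) (ρ a)]
  congr 1
  apply Finset.sum_congr rfl
  intro i hi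
  rw [Finset.mem_range] at hi
  rw [sizeUpTo_snocTo_of_le n hk c (by omega : i + 1 ≤ c.length)]
  congr 1
  have h1 : c.sizeUpTo (i + 1) ≤ k := c.sizeUpTo_le _
  omega

lemma pairS_snocTo (n : ℕ) {k : ℕ} (hk : k < n) (c : Composition k) :
    pairS ρ (snocTo n hk c) = pairS ρ c + ptS ρ (n - k) c := by
  rw [pairS_range, pairS_range, length_snocTo]
  have hlast : (snocTo n hk c).sizeUpTo (c.length + 1) = n := by
    have := (snocTo n hk c).sizeUpTo_length
    rwa [length_snocTo] at this
  have hsz : ∀ i, i < c.length → (snocTo n hk c).sizeUpTo (i + 1) = c.sizeUpTo (i + 1) :=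
    fun i hi => sizeUpTo_snocTo_of_le n hk c (by omega)
  rw [Finset.sum_range_succ]
  have hzero : ∑ j ∈ range (c.length + 1),
      (if c.length < j then ρ ((snocTo n hk c).sizeUpTo (j + 1)
        - (snocTo n hk c).sizeUpTo (c.length + 1)) else 0) = 0 := by
    apply Finset.sum_eq_zero
    intro j hj
    rw [Finset.mem_range] at hj
    rw [if_neg (by omega)]
  rw [hzero, add_zero]
  have hsplit : ∀ i ∈ range c.length,
      (∑ j ∈ range (c.length + 1),
        if i < j then ρ ((snocTo n hk c).sizeUpTo (j + 1)
          - (snocTo n hk c).sizeUpTo (i + 1)) else 0)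
      = (∑ j ∈ range c.length,
          if i < j then ρ (c.sizeUpTo (j + 1) - c.sizeUpTo (i + 1)) else 0)
        + ρ ((n - k) + (k - c.sizeUpTo (i + 1))) := by
    intro i hi
    rw [Finset.mem_range] at hi
    rw [Finset.sum_range_succ, if_pos (by omega), hlast, hsz i hi]
    congr 1
    · apply Finset.sum_congr rfl
      intro j hj
      rw [Finset.mem_range] at hj
      by_cases hij : i < j
      · rw [if_pos hij, if_pos hij, hsz j hj]
      · rw [if_neg hij, if_neg hij]
    · congr 1
      have h1 : c.sizeUpTo (i + 1) ≤ k := c.sizeUpTo_le _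
      omega
  rw [Finset.sum_congr rfl hsplit, Finset.sum_add_distrib]
  congr 1
  rw [ptS_range]


/-! ### Sum quantities and recursions -/

/-- total `K`-weight of compositions of `m` -/
noncomputable def Z0 (m : ℕ) : ℝ := ∑ c : Composition m, Pw K c

noncomputable def Nn (m : ℕ) : ℝ := ∑ c : Composition m, Pw K c * (c.length : ℝ)

noncomputable def Ee (a r : ℕ) : ℝ := ∑ c : Composition r, Pw K c * ptS ρ a c

noncomputable def Rr (m : ℕ) : ℝ := ∑ c : Composition m, Pw K c * pairS ρ c

lemma Pw_zero (c : Composition 0) : Pw K c = 1 := by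
  rw [Pw_eq_list, comp_zero_blocks c]
  simp

lemma Z0_zero : Z0 K 0 = 1 := by
  rw [Z0, Fintype.sum_unique]
  exact Pw_zero K _

lemma Nn_zero : Nn K 0 = 0 := by
  rw [Nn, Fintype.sum_unique, comp_zero_length]
  simp

lemma Ee_zero (a : ℕ) : Ee K ρ a 0 = 0 := by
  rw [Ee, Fintype.sum_unique, ptS_range, comp_zero_length]
  simp

lemma Rr_zero : Rr K ρ 0 = 0 := by
  rw [Rr, Fintype.sum_unique, pairS_range, comp_zero_length]
  simp

lemma u_rec (m : ℕ) (hm : 0 < m) :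
    renewalMass K m = ∑ k ∈ range m, K (m - k) * renewalMass K k := by
  obtain ⟨n, rfl⟩ : ∃ n, m = n + 1 := ⟨m - 1, by omega⟩
  rw [renewalMass,
    ← Finset.sum_range_reflect (fun k => K (k + 1) * renewalMass K (n - k)) (n + 1)]
  apply Finset.sum_congr rfl
  intro j hj
  rw [Finset.mem_range] at hj
  have h1 : n + 1 - 1 - j = n - j := by omega
  rw [h1]
  have h2 : n - j + 1 = n + 1 - j := by omega
  have h3 : n - (n - j) = j := by omega
  rw [h2, h3]

lemma swap_tri (n : ℕ) (f : ℕ → ℕ → ℝ) :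
    ∑ k ∈ range n, ∑ t ∈ Icc 1 k, f t (k - t)
      = ∑ t ∈ Icc 1 (n - 1), ∑ j ∈ range (n - t), f t j := by
  rw [Finset.sum_sigma', Finset.sum_sigma']
  apply Finset.sum_nbij' (fun p => (⟨p.2, p.1 - p.2⟩ : Σ _ : ℕ, ℕ))
    (fun q => (⟨q.1 + q.2, q.1⟩ : Σ _ : ℕ, ℕ))
  · rintro ⟨k, t⟩ hkt
    simp only [Finset.mem_sigma, Finset.mem_range, Finset.mem_Icc] at hkt ⊢
    omega
  · rintro ⟨t, j⟩ htj
    simp only [Finset.mem_sigma, Finset.mem_range, Finset.mem_Icc] at htj ⊢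
    omega
  · rintro ⟨k, t⟩ hkt
    simp only [Finset.mem_sigma, Finset.mem_range, Finset.mem_Icc] at hkt
    simp only [Sigma.mk.inj_iff, heq_eq_eq]
    exact ⟨by omega, trivial⟩
  · rintro ⟨t, j⟩ htj
    simp only [Finset.mem_sigma, Finset.mem_range, Finset.mem_Icc] at htj
    simp only [Sigma.mk.inj_iff, heq_eq_eq]
    exact ⟨trivial, by omega⟩
  · rintro ⟨k, t⟩ _
    rfl

lemma conv_swap (m : ℕ) (g : ℕ → ℝ) :
    ∑ k ∈ range m, K (m - k) * (∑ t ∈ Icc 1 k, g t * renewalMass K (k - t))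
      = ∑ t ∈ Icc 1 (m - 1), g t * renewalMass K (m - t) := by
  calc ∑ k ∈ range m, K (m - k) * (∑ t ∈ Icc 1 k, g t * renewalMass K (k - t))
      = ∑ k ∈ range m, ∑ t ∈ Icc 1 k,
          (fun t j => g t * (K ((m - t) - j) * renewalMass K j)) t (k - t) := by
        apply Finset.sum_congr rfl
        intro k hk
        rw [Finset.mem_range] at hk
        rw [Finset.mul_sum]
        apply Finset.sum_congr rfl
        intro t ht
        rw [Finset.mem_Icc] at ht
        show K (m - k) * (g t * renewalMass K (k - t))
          = g t * (K ((m - t) - (k - t)) * renewalMass K (k - t))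
        have h2 : (m - t) - (k - t) = m - k := by omega
        rw [h2]
        ring
    _ = ∑ t ∈ Icc 1 (m - 1), ∑ j ∈ range (m - t),
          (fun t j => g t * (K ((m - t) - j) * renewalMass K j)) t j :=
        swap_tri m (fun t j => g t * (K ((m - t) - j) * renewalMass K j))
    _ = ∑ t ∈ Icc 1 (m - 1), g t * renewalMass K (m - t) := by
        apply Finset.sum_congr rfl
        intro t ht
        rw [Finset.mem_Icc] at ht
        show ∑ j ∈ range (m - t), g t * (K ((m - t) - j) * renewalMass K j)
          = g t * renewalMass K (m - t)
        rw [← Finset.mul_sum, ← u_rec K (m - t) (by omega)]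

lemma icc_top (m : ℕ) (hm : 0 < m) (g : ℕ → ℝ) :
    ∑ t ∈ Icc 1 (m - 1), g t * renewalMass K (m - t) + g m
      = ∑ t ∈ Icc 1 m, g t * renewalMass K (m - t) := by
  obtain ⟨b, rfl⟩ : ∃ b, m = b + 1 := ⟨m - 1, by omega⟩
  rw [Finset.sum_Icc_succ_top (by omega : 1 ≤ b + 1)]
  simp [renewalMass]

lemma Z0_rec (n : ℕ) (hn : 0 < n) : Z0 K n = ∑ k ∈ range n, K (n - k) * Z0 K k := by
  rw [Z0, sum_comp_decomp hn, ← Fin.sum_univ_eq_sum_range (fun k => K (n - k) * Z0 K k) n]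
  apply Finset.sum_congr rfl
  intro k _
  rw [Z0, Finset.mul_sum]
  exact Finset.sum_congr rfl fun c _ => Pw_snocTo K n k.isLt c

lemma Nn_rec (n : ℕ) (hn : 0 < n) :
    Nn K n = ∑ k ∈ range n, K (n - k) * (Nn K k + Z0 K k) := by
  rw [Nn, sum_comp_decomp hn,
    ← Fin.sum_univ_eq_sum_range (fun k => K (n - k) * (Nn K k + Z0 K k)) n]
  apply Finset.sum_congr rfl
  intro k _
  rw [Nn, Z0, ← Finset.sum_add_distrib, Finset.mul_sum]
  apply Finset.sum_congr rfl
  intro c _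
  rw [Pw_snocTo, length_snocTo]
  push_cast
  ring

lemma Ee_rec (a : ℕ) (n : ℕ) (hn : 0 < n) :
    Ee K ρ a n = ∑ k ∈ range n, K (n - k) * (ρ a * Z0 K k + Ee K ρ (a + (n - k)) k) := by
  rw [Ee, sum_comp_decomp hn,
    ← Fin.sum_univ_eq_sum_range
      (fun k => K (n - k) * (ρ a * Z0 K k + Ee K ρ (a + (n - k)) k)) n]
  apply Finset.sum_congr rfl
  intro k _
  rw [Ee, Z0, Finset.mul_sum, ← Finset.sum_add_distrib, Finset.mul_sum]
  apply Finset.sum_congr rfl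
  intro c _
  rw [Pw_snocTo, ptS_snocTo]
  ring

lemma Rr_rec (n : ℕ) (hn : 0 < n) :
    Rr K ρ n = ∑ k ∈ range n, K (n - k) * (Rr K ρ k + Ee K ρ (n - k) k) := by
  rw [Rr, sum_comp_decomp hn,
    ← Fin.sum_univ_eq_sum_range (fun k => K (n - k) * (Rr K ρ k + Ee K ρ (n - k) k)) n]
  apply Finset.sum_congr rfl
  intro k _
  rw [Rr, Ee, ← Finset.sum_add_distrib, Finset.mul_sum]
  apply Finset.sum_congr rfl
  intro c _
  rw [Pw_snocTo, pairS_snocTo]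
  ring

lemma Z0_eq (m : ℕ) : Z0 K m = renewalMass K m := by
  induction m using Nat.strong_induction_on with
  | _ m ih =>
    rcases Nat.eq_zero_or_pos m with rfl | hm
    · rw [Z0_zero]; simp [renewalMass]
    · rw [Z0_rec K m hm, u_rec K m hm]
      apply Finset.sum_congr rfl
      intro k hk
      rw [Finset.mem_range] at hk
      rw [ih k hk]

lemma Nn_eq (m : ℕ) :
    Nn K m = ∑ t ∈ Icc 1 m, renewalMass K t * renewalMass K (m - t) := by
  induction m using Nat.strong_induction_on with
  | _ m ih =>
    rcases Nat.eq_zero_or_pos m with rfl | hm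
    · rw [Nn_zero]; simp
    · rw [Nn_rec K m hm]
      have h1 : ∀ k ∈ range m, K (m - k) * (Nn K k + Z0 K k)
          = K (m - k) * (∑ t ∈ Icc 1 k, renewalMass K t * renewalMass K (k - t))
            + K (m - k) * renewalMass K k := by
        intro k hk
        rw [Finset.mem_range] at hk
        rw [ih k hk, Z0_eq]
        ring
      rw [Finset.sum_congr rfl h1, Finset.sum_add_distrib, conv_swap,
        ← u_rec K m hm, icc_top K m hm]

lemma Ee_eq (a r : ℕ) :
    Ee K ρ a r = ∑ t ∈ Icc 1 r,
      (renewalMass K t * ρ (a + (r - t))) * renewalMass K (r - t) := by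
  induction r using Nat.strong_induction_on generalizing a with
  | _ r ih =>
    rcases Nat.eq_zero_or_pos r with rfl | hr
    · rw [Ee_zero]; simp
    · rw [Ee_rec K ρ a r hr]
      have h1 : ∀ k ∈ range r, K (r - k) * (ρ a * Z0 K k + Ee K ρ (a + (r - k)) k)
          = K (r - k) * (∑ t ∈ Icc 1 k,
              (renewalMass K t * ρ (a + (r - t))) * renewalMass K (k - t))
            + ρ a * (K (r - k) * renewalMass K k) := by
        intro k hk
        rw [Finset.mem_range] at hk
        rw [ih k hk, Z0_eq]
        have h2 : ∀ t ∈ Icc 1 k,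
            (renewalMass K t * ρ (a + (r - k) + (k - t))) * renewalMass K (k - t)
              = (renewalMass K t * ρ (a + (r - t))) * renewalMass K (k - t) := by
          intro t ht
          rw [Finset.mem_Icc] at ht
          have : a + (r - k) + (k - t) = a + (r - t) := by omega
          rw [this]
        rw [Finset.sum_congr rfl h2]
        ring
      rw [Finset.sum_congr rfl h1, Finset.sum_add_distrib, conv_swap,
        ← Finset.mul_sum, ← u_rec K r hr]
      have : ρ a * renewalMass K r = (fun t => renewalMass K t * ρ (a + (r - t))) r := by
        simp [mul_comm]
      rw [this, icc_top K r hr (fun t => renewalMass K t * ρ (a + (r - t)))]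

/-- inner pair weight -/
noncomputable def Qv (t : ℕ) : ℝ :=
  ∑ s ∈ Ico 1 t, (renewalMass K s * ρ (t - s)) * renewalMass K (t - s)

lemma Rr_eq (m : ℕ) :
    Rr K ρ m = ∑ t ∈ Icc 1 m, Qv K ρ t * renewalMass K (m - t) := by
  induction m using Nat.strong_induction_on with
  | _ m ih =>
    rcases Nat.eq_zero_or_pos m with rfl | hm
    · rw [Rr_zero]; simp
    · rw [Rr_rec K ρ m hm]
      have h1 : ∀ k ∈ range m, K (m - k) * (Rr K ρ k + Ee K ρ (m - k) k)
          = K (m - k) * (∑ t ∈ Icc 1 k, Qv K ρ t * renewalMass K (k - t))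
            + K (m - k) * (∑ t ∈ Icc 1 k,
                (renewalMass K t * ρ (m - t)) * renewalMass K (k - t)) := by
        intro k hk
        rw [Finset.mem_range] at hk
        rw [ih k hk, Ee_eq]
        have h2 : ∀ t ∈ Icc 1 k,
            (renewalMass K t * ρ ((m - k) + (k - t))) * renewalMass K (k - t)
              = (renewalMass K t * ρ (m - t)) * renewalMass K (k - t) := by
          intro t ht
          rw [Finset.mem_Icc] at ht
          have : (m - k) + (k - t) = m - t := by omega
          rw [this]
        rw [Finset.sum_congr rfl h2]
        ring
      rw [Finset.sum_congr rfl h1, Finset.sum_add_distrib, conv_swap, conv_swap]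
      have hQ : Qv K ρ m = ∑ t ∈ Icc 1 (m - 1),
          (renewalMass K t * ρ (m - t)) * renewalMass K (m - t) := by
        rw [Qv]
        obtain ⟨b, rfl⟩ : ∃ b, m = b + 1 := ⟨m - 1, by omega⟩
        rw [Finset.Ico_add_one_right_eq_Icc]
        simp
      rw [← hQ, icc_top K m hm]

/-! ### Tail and renewal identities -/

lemma summable_shift (hKsum : HasSum (fun n : ℕ => K (n + 1)) 1) (r : ℕ) :
    Summable (fun l : ℕ => K (r + 1 + l)) := by
  have h0 := (summable_nat_add_iff (f := fun n => K (n + 1)) r).2 hKsum.summable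
  exact h0.congr (fun l => by congr 1; omega)

lemma tailK_nonneg (hKpos : ∀ n : ℕ, 1 ≤ n → 0 < K n) (r : ℕ) : 0 ≤ tailK K r :=
  tsum_nonneg fun l => (hKpos _ (by omega)).le

lemma tailK_pos (hKpos : ∀ n : ℕ, 1 ≤ n → 0 < K n)
    (hKsum : HasSum (fun n : ℕ => K (n + 1)) 1) (r : ℕ) : 0 < tailK K r :=
  Summable.tsum_pos (summable_shift K hKsum r) (fun l => (hKpos _ (by omega)).le) 0
    (hKpos _ (by omega))

lemma tailK_zero (hKsum : HasSum (fun n : ℕ => K (n + 1)) 1) : tailK K 0 = 1 := by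
  rw [tailK]
  have h1 : ∀ l : ℕ, K (0 + 1 + l) = K (l + 1) := fun l => by congr 1; omega
  rw [tsum_congr h1]
  exact hKsum.tsum_eq

lemma tailK_succ (hKsum : HasSum (fun n : ℕ => K (n + 1)) 1) (r : ℕ) :
    tailK K r = K (r + 1) + tailK K (r + 1) := by
  rw [tailK, Summable.tsum_eq_zero_add (summable_shift K hKsum r)]
  congr 1
  conv_rhs => rw [tailK]
  apply tsum_congr
  intro l
  congr 1
  omega

lemma tailK_le_one (hKpos : ∀ n : ℕ, 1 ≤ n → 0 < K n)
    (hKsum : HasSum (fun n : ℕ => K (n + 1)) 1) (r : ℕ) : tailK K r ≤ 1 := by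
  induction r with
  | zero => exact le_of_eq (tailK_zero K hKsum)
  | succ r ih =>
    have h := tailK_succ K hKsum r
    have hp := (hKpos (r + 1) (by omega)).le
    linarith

lemma u_nonneg (hKpos : ∀ n : ℕ, 1 ≤ n → 0 < K n) (n : ℕ) : 0 ≤ renewalMass K n := by
  induction n using Nat.strong_induction_on with
  | _ n ih =>
    rcases n with _ | n
    · rw [renewalMass]; norm_num
    · rw [renewalMass]
      apply Finset.sum_nonneg
      intro k hk
      rw [Finset.mem_range] at hk
      exact mul_nonneg (hKpos _ (by omega)).le (ih _ (by omega))

lemma u_le_one (hKpos : ∀ n : ℕ, 1 ≤ n → 0 < K n)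
    (hKsum : HasSum (fun n : ℕ => K (n + 1)) 1) (n : ℕ) : renewalMass K n ≤ 1 := by
  induction n using Nat.strong_induction_on with
  | _ n ih =>
    rcases n with _ | n
    · rw [renewalMass]
    · rw [renewalMass]
      calc ∑ k ∈ range (n + 1), K (k + 1) * renewalMass K (n - k)
          ≤ ∑ k ∈ range (n + 1), K (k + 1) := by
            apply Finset.sum_le_sum
            intro k hk
            rw [Finset.mem_range] at hk
            calc K (k + 1) * renewalMass K (n - k)
                ≤ K (k + 1) * 1 :=
                  mul_le_mul_of_nonneg_left (ih _ (by omega)) (hKpos _ (by omega)).le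
              _ = K (k + 1) := mul_one _
        _ ≤ 1 := sum_le_hasSum _ (fun k _ => (hKpos _ (by omega)).le) hKsum

lemma renewal_id (hKsum : HasSum (fun n : ℕ => K (n + 1)) 1) (n : ℕ) :
    ∑ t ∈ range (n + 1), renewalMass K t * tailK K (n - t) = 1 := by
  induction n with
  | zero =>
    simp [renewalMass, tailK_zero K hKsum]
  | succ n ih =>
    rw [Finset.sum_range_succ]
    have hu : renewalMass K (n + 1)
        = ∑ t ∈ range (n + 1), renewalMass K t * K (n + 1 - t) := by
      rw [u_rec K (n + 1) (by omega)]
      exact Finset.sum_congr rfl fun t _ => mul_comm _ _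
    have h1 : ∀ t ∈ range (n + 1),
        renewalMass K t * tailK K (n + 1 - t)
          = renewalMass K t * tailK K (n - t) - renewalMass K t * K (n + 1 - t) := by
      intro t ht
      rw [Finset.mem_range] at ht
      have h2 : tailK K (n - t) = K (n - t + 1) + tailK K (n - t + 1) := tailK_succ K hKsum _
      have h3 : n - t + 1 = n + 1 - t := by omega
      rw [h3] at h2
      rw [h2]
      ring
    rw [Finset.sum_congr rfl h1, Finset.sum_sub_distrib, ih, ← hu,
      Nat.sub_self, tailK_zero K hKsum]
    ring

/-! ### Partition function identities -/

/-- Exponent in the annealed weight. -/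
noncomputable def Xe (β h : ℝ) {m : ℕ} (c : Composition m) : ℝ :=
  (c.length : ℝ) * (h + β ^ 2 / 2) + β ^ 2 * pairS ρ c

variable (β h : ℝ)

lemma annWeight_eq {m : ℕ} (c : Composition m) :
    annWeight K ρ β h c = Real.exp (Xe ρ β h c) * Pw K c := rfl

lemma Zann_eq (m : ℕ) :
    Zann K ρ β h m = ∑ c : Composition m, Real.exp (Xe ρ β h c) * Pw K c := rfl

lemma Xe_zero (c : Composition 0) : Xe ρ β h c = 0 := by
  rw [Xe, pairS_range, comp_zero_length]
  simp

lemma Zann_zero : Zann K ρ β h 0 = 1 := by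
  rw [Zann_eq, Fintype.sum_unique, Xe_zero, Pw_zero]
  simp

lemma Zfree_eq (n : ℕ) :
    Zfree K ρ β h n = ∑ m ∈ range (n + 1), Zann K ρ β h m * tailK K (n - m) := by
  have hins : range (n + 1) = insert 0 (Icc 1 n) := by
    ext x
    simp only [Finset.mem_range, Finset.mem_insert, Finset.mem_Icc]
    omega
  rw [Zfree, hins, Finset.sum_insert (by simp), Zann_zero]
  simp

lemma Pw_nonneg (hKpos : ∀ n : ℕ, 1 ≤ n → 0 < K n) {m : ℕ} (c : Composition m) :
    0 ≤ Pw K c :=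
  Finset.prod_nonneg fun i _ => (hKpos _ (c.one_le_blocksFun i)).le

lemma Zann_nonneg (hKpos : ∀ n : ℕ, 1 ≤ n → 0 < K n) (m : ℕ) :
    0 ≤ Zann K ρ β h m := by
  rw [Zann_eq]
  exact Finset.sum_nonneg fun c _ =>
    mul_nonneg (Real.exp_pos _).le (Pw_nonneg K hKpos c)

lemma Zfree_pos (hKpos : ∀ n : ℕ, 1 ≤ n → 0 < K n)
    (hKsum : HasSum (fun n : ℕ => K (n + 1)) 1) (n : ℕ) :
    0 < Zfree K ρ β h n := by
  rw [Zfree]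
  apply add_pos_of_pos_of_nonneg (tailK_pos K hKpos hKsum n)
  exact Finset.sum_nonneg fun m _ =>
    mul_nonneg (Zann_nonneg K ρ β h hKpos m) (tailK_nonneg K hKpos _)

/-- convolution against the tail kernel integrates renewal sums -/
lemma tail_conv (hKsum : HasSum (fun n : ℕ => K (n + 1)) 1) (n : ℕ) (g : ℕ → ℝ) :
    ∑ m ∈ range (n + 1), tailK K (n - m) * (∑ t ∈ Icc 1 m, g t * renewalMass K (m - t))
      = ∑ t ∈ Icc 1 n, g t := by
  calc ∑ m ∈ range (n + 1), tailK K (n - m) * (∑ t ∈ Icc 1 m, g t * renewalMass K (m - t))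
      = ∑ m ∈ range (n + 1), ∑ t ∈ Icc 1 m,
          (fun t j => g t * (renewalMass K j * tailK K ((n - t) - j))) t (m - t) := by
        apply Finset.sum_congr rfl
        intro m hm
        rw [Finset.mem_range] at hm
        rw [Finset.mul_sum]
        apply Finset.sum_congr rfl
        intro t ht
        rw [Finset.mem_Icc] at ht
        show tailK K (n - m) * (g t * renewalMass K (m - t))
          = g t * (renewalMass K (m - t) * tailK K ((n - t) - (m - t)))
        have h2 : (n - t) - (m - t) = n - m := by omega
        rw [h2]
        ring
    _ = ∑ t ∈ Icc 1 ((n + 1) - 1), ∑ j ∈ range ((n + 1) - t),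
          (fun t j => g t * (renewalMass K j * tailK K ((n - t) - j))) t j :=
        swap_tri (n + 1) (fun t j => g t * (renewalMass K j * tailK K ((n - t) - j)))
    _ = ∑ t ∈ Icc 1 n, g t := by
        apply Finset.sum_congr (by congr 1)
        intro t ht
        rw [Finset.mem_Icc] at ht
        show ∑ j ∈ range ((n + 1) - t), g t * (renewalMass K j * tailK K ((n - t) - j))
          = g t
        have h3 : (n + 1) - t = (n - t) + 1 := by omega
        rw [h3, ← Finset.mul_sum, renewal_id K hKsum (n - t), mul_one]

lemma A_eq (hKsum : HasSum (fun n : ℕ => K (n + 1)) 1) (n : ℕ) :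
    ∑ m ∈ range (n + 1), tailK K (n - m) * Nn K m
      = ∑ t ∈ Icc 1 n, renewalMass K t := by
  have h1 : ∀ m ∈ range (n + 1), tailK K (n - m) * Nn K m
      = tailK K (n - m) * (∑ t ∈ Icc 1 m, renewalMass K t * renewalMass K (m - t)) := by
    intro m _
    rw [Nn_eq]
  rw [Finset.sum_congr rfl h1, tail_conv K hKsum n]

lemma B_eq (hKsum : HasSum (fun n : ℕ => K (n + 1)) 1) (n : ℕ) :
    ∑ m ∈ range (n + 1), tailK K (n - m) * Rr K ρ m
      = ∑ t ∈ Icc 1 n, Qv K ρ t := by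
  have h1 : ∀ m ∈ range (n + 1), tailK K (n - m) * Rr K ρ m
      = tailK K (n - m) * (∑ t ∈ Icc 1 m, Qv K ρ t * renewalMass K (m - t)) := by
    intro m _
    rw [Rr_eq]
  rw [Finset.sum_congr rfl h1, tail_conv K hKsum n]

lemma Qv_total (n : ℕ) :
    ∑ t ∈ Icc 1 n, Qv K ρ t
      = ∑ s ∈ Icc 1 n, renewalMass K s
          * (∑ d ∈ Icc 1 (n - s), ρ d * renewalMass K d) := by
  calc ∑ t ∈ Icc 1 n, Qv K ρ t
      = ∑ t ∈ Icc 1 n, ∑ s ∈ Ico 1 t,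
          (renewalMass K s * ρ (t - s)) * renewalMass K (t - s) := rfl
    _ = ∑ s ∈ Icc 1 n, ∑ d ∈ Icc 1 (n - s),
          (renewalMass K s * ρ d) * renewalMass K d := by
        rw [Finset.sum_sigma', Finset.sum_sigma']
        apply Finset.sum_nbij' (fun p => (⟨p.2, p.1 - p.2⟩ : Σ _ : ℕ, ℕ))
          (fun q => (⟨q.1 + q.2, q.1⟩ : Σ _ : ℕ, ℕ))
        · rintro ⟨t, s⟩ hts
          simp only [Finset.mem_sigma, Finset.mem_Icc, Finset.mem_Ico] at hts ⊢
          omega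
        · rintro ⟨s, d⟩ hsd
          simp only [Finset.mem_sigma, Finset.mem_Icc, Finset.mem_Ico] at hsd ⊢
          omega
        · rintro ⟨t, s⟩ hts
          simp only [Finset.mem_sigma, Finset.mem_Icc, Finset.mem_Ico] at hts
          simp only [Sigma.mk.inj_iff, heq_eq_eq]
          exact ⟨by omega, trivial⟩
        · rintro ⟨s, d⟩ hsd
          simp only [Finset.mem_sigma, Finset.mem_Icc, Finset.mem_Ico] at hsd
          simp only [Sigma.mk.inj_iff, heq_eq_eq]
          exact ⟨trivial, by omega⟩
        · rintro ⟨t, s⟩ _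
          rfl
    _ = ∑ s ∈ Icc 1 n, renewalMass K s * (∑ d ∈ Icc 1 (n - s), ρ d * renewalMass K d) := by
        apply Finset.sum_congr rfl
        intro s _
        rw [Finset.mul_sum]
        apply Finset.sum_congr rfl
        intro d _
        ring

/-- The Jensen lower bound on `log Zfree`. -/
lemma log_Zfree_bound (hKpos : ∀ n : ℕ, 1 ≤ n → 0 < K n)
    (hKsum : HasSum (fun n : ℕ => K (n + 1)) 1) (n : ℕ) :
    (h + β ^ 2 / 2) * (∑ t ∈ Icc 1 n, renewalMass K t)
      + β ^ 2 * (∑ s ∈ Icc 1 n, renewalMass K s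
          * (∑ d ∈ Icc 1 (n - s), ρ d * renewalMass K d))
      ≤ Real.log (Zfree K ρ β h n) := by
  classical
  set W : ((m : Fin (n + 1)) × Composition (m : ℕ)) → ℝ :=
    fun p => Pw K p.2 * tailK K (n - (p.1 : ℕ)) with hW
  set Zx : ((m : Fin (n + 1)) × Composition (m : ℕ)) → ℝ :=
    fun p => Real.exp (Xe ρ β h p.2) with hZx
  have hW0 : ∀ p, 0 ≤ W p := fun p =>
    mul_nonneg (Pw_nonneg K hKpos p.2) (tailK_nonneg K hKpos _)
  have hsig : ∀ (F : ∀ m : Fin (n + 1), Composition (m : ℕ) → ℝ),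
      ∑ p : (m : Fin (n + 1)) × Composition (m : ℕ), F p.1 p.2
        = ∑ m : Fin (n + 1), ∑ c : Composition (m : ℕ), F m c := by
    intro F
    rw [Finset.sum_sigma']
    rfl
  have hW1 : ∑ p : (m : Fin (n + 1)) × Composition (m : ℕ), W p = 1 := by
    rw [hW, hsig (fun m c => Pw K c * tailK K (n - (m : ℕ)))]
    have h1 : ∀ m : Fin (n + 1), ∑ c : Composition (m : ℕ), Pw K c * tailK K (n - (m : ℕ))
        = renewalMass K (m : ℕ) * tailK K (n - (m : ℕ)) := by
      intro m
      rw [← Finset.sum_mul, ← Z0, Z0_eq]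
    rw [Finset.sum_congr rfl fun m _ => h1 m,
      Fin.sum_univ_eq_sum_range (fun m => renewalMass K m * tailK K (n - m)) (n + 1)]
    exact renewal_id K hKsum n
  have hZsum : ∑ p : (m : Fin (n + 1)) × Composition (m : ℕ), W p * Zx p
      = Zfree K ρ β h n := by
    rw [hW, hZx, hsig (fun m c => Pw K c * tailK K (n - (m : ℕ)) * Real.exp (Xe ρ β h c))]
    rw [Zfree_eq, ← Fin.sum_univ_eq_sum_range
      (fun m => Zann K ρ β h m * tailK K (n - m)) (n + 1)]
    apply Finset.sum_congr rfl
    intro m _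
    rw [Zann_eq, Finset.sum_mul]
    apply Finset.sum_congr rfl
    intro c _
    ring
  have hgm := Real.geom_mean_le_arith_mean_weighted Finset.univ W Zx
    (fun p _ => hW0 p) hW1 (fun p _ => (Real.exp_pos _).le)
  have hprod : ∏ p : (m : Fin (n + 1)) × Composition (m : ℕ), Zx p ^ W p
      = Real.exp (∑ p : (m : Fin (n + 1)) × Composition (m : ℕ), Xe ρ β h p.2 * W p) := by
    rw [Real.exp_sum]
    apply Finset.prod_congr rfl
    intro p _
    rw [hZx, Real.rpow_def_of_pos (Real.exp_pos _), Real.log_exp]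
  have hkey : Real.exp (∑ p : (m : Fin (n + 1)) × Composition (m : ℕ), Xe ρ β h p.2 * W p)
      ≤ Zfree K ρ β h n := by
    rw [← hprod, ← hZsum]
    exact hgm
  have hlog : (∑ p : (m : Fin (n + 1)) × Composition (m : ℕ), Xe ρ β h p.2 * W p)
      ≤ Real.log (Zfree K ρ β h n) :=
    (Real.le_log_iff_exp_le (Zfree_pos K ρ β h hKpos hKsum n)).2 hkey
  refine le_trans (le_of_eq ?_) hlog
  rw [hW, hsig (fun m c => Xe ρ β h c * (Pw K c * tailK K (n - (m : ℕ))))]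
  have h2 : ∀ m : Fin (n + 1),
      ∑ c : Composition (m : ℕ), Xe ρ β h c * (Pw K c * tailK K (n - (m : ℕ)))
        = (h + β ^ 2 / 2) * (tailK K (n - (m : ℕ)) * Nn K (m : ℕ))
          + β ^ 2 * (tailK K (n - (m : ℕ)) * Rr K ρ (m : ℕ)) := by
    intro m
    rw [Nn, Rr, Finset.mul_sum, Finset.mul_sum, Finset.mul_sum, Finset.mul_sum,
      ← Finset.sum_add_distrib]
    apply Finset.sum_congr rfl
    intro c _
    rw [Xe]
    ring
  rw [Finset.sum_congr rfl fun m _ => h2 m, Finset.sum_add_distrib,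
    ← Finset.mul_sum, ← Finset.mul_sum,
    Fin.sum_univ_eq_sum_range (fun m => tailK K (n - m) * Nn K m) (n + 1),
    Fin.sum_univ_eq_sum_range (fun m => tailK K (n - m) * Rr K ρ m) (n + 1),
    A_eq K hKsum n, B_eq K ρ hKsum n, Qv_total]

/-! ### Crude upper bound on `Zfree` -/

lemma sizeUpTo_lt_sizeUpTo {m : ℕ} (c : Composition m) {i j : ℕ}
    (hij : i < j) (hj : j < c.length) :
    c.sizeUpTo (i + 1) < c.sizeUpTo (j + 1) := by
  have h1 : c.sizeUpTo (i + 1) < c.sizeUpTo (i + 2) :=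
    c.sizeUpTo_strict_mono (by omega)
  have h2 : c.sizeUpTo (i + 2) ≤ c.sizeUpTo (j + 1) :=
    c.monotone_sizeUpTo (by omega)
  omega

lemma pairS_le (hρ : Summable fun n : ℕ => |ρ (n + 1)|) {m : ℕ} (c : Composition m) :
    pairS ρ c ≤ (c.length : ℝ) * ∑' n : ℕ, |ρ (n + 1)| := by
  rw [pairS_range]
  have hM : ∀ i ∈ range c.length,
      (∑ j ∈ range c.length,
        if i < j then ρ (c.sizeUpTo (j + 1) - c.sizeUpTo (i + 1)) else 0)
      ≤ ∑' n : ℕ, |ρ (n + 1)| := by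
    intro i hi
    rw [Finset.mem_range] at hi
    have h1 : (∑ j ∈ range c.length,
        if i < j then ρ (c.sizeUpTo (j + 1) - c.sizeUpTo (i + 1)) else 0)
        ≤ ∑ j ∈ (range c.length).filter (fun j => i < j),
            |ρ (c.sizeUpTo (j + 1) - c.sizeUpTo (i + 1))| := by
      rw [← Finset.sum_filter]
      exact Finset.sum_le_sum fun j _ => le_abs_self _
    refine le_trans h1 ?_
    set S := (range c.length).filter (fun j => i < j) with hS
    set e : ℕ → ℕ := fun j => c.sizeUpTo (j + 1) - c.sizeUpTo (i + 1) - 1 with he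
    have hmem : ∀ j ∈ S, i < j ∧ j < c.length := by
      intro j hj
      rw [hS, Finset.mem_filter, Finset.mem_range] at hj
      exact ⟨hj.2, hj.1⟩
    have hval : ∀ j ∈ S, |ρ (c.sizeUpTo (j + 1) - c.sizeUpTo (i + 1))| = |ρ (e j + 1)| := by
      intro j hj
      obtain ⟨h2, h3⟩ := hmem j hj
      have h4 := sizeUpTo_lt_sizeUpTo c h2 h3
      show |ρ (c.sizeUpTo (j + 1) - c.sizeUpTo (i + 1))|
        = |ρ (c.sizeUpTo (j + 1) - c.sizeUpTo (i + 1) - 1 + 1)|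
      congr 2
      omega
    have hinj : ∀ x ∈ S, ∀ y ∈ S, e x = e y → x = y := by
      intro x hx y hy hxy
      obtain ⟨hx1, hx2⟩ := hmem x hx
      obtain ⟨hy1, hy2⟩ := hmem y hy
      by_contra hne
      rcases Nat.lt_or_ge x y with hlt | hge
      · have := sizeUpTo_lt_sizeUpTo c hlt hy2
        have h4 := sizeUpTo_lt_sizeUpTo c hx1 hx2
        have h5 := sizeUpTo_lt_sizeUpTo c hy1 hy2
        rw [he] at hxy
        simp only at hxy
        omega
      · have hlt : y < x := by omega
        have := sizeUpTo_lt_sizeUpTo c hlt hx2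
        have h4 := sizeUpTo_lt_sizeUpTo c hx1 hx2
        have h5 := sizeUpTo_lt_sizeUpTo c hy1 hy2
        rw [he] at hxy
        simp only at hxy
        omega
    calc ∑ j ∈ S, |ρ (c.sizeUpTo (j + 1) - c.sizeUpTo (i + 1))|
        = ∑ j ∈ S, |ρ (e j + 1)| := Finset.sum_congr rfl hval
      _ = ∑ d ∈ S.image e, |ρ (d + 1)| := (Finset.sum_image (f := fun d => |ρ (d + 1)|) (g := e) hinj).symm
      _ ≤ ∑' n : ℕ, |ρ (n + 1)| := Summable.sum_le_tsum _ (fun d _ => abs_nonneg _) hρ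
  calc ∑ i ∈ range c.length, (∑ j ∈ range c.length,
        if i < j then ρ (c.sizeUpTo (j + 1) - c.sizeUpTo (i + 1)) else 0)
      ≤ ∑ i ∈ range c.length, ∑' n : ℕ, |ρ (n + 1)| := Finset.sum_le_sum hM
    _ = (c.length : ℝ) * ∑' n : ℕ, |ρ (n + 1)| := by
        rw [Finset.sum_const, Finset.card_range, nsmul_eq_mul]

lemma Zann_le (hKpos : ∀ n : ℕ, 1 ≤ n → 0 < K n)
    (hKsum : HasSum (fun n : ℕ => K (n + 1)) 1)
    (hρ : Summable fun n : ℕ => |ρ (n + 1)|) (β h : ℝ) (m : ℕ) :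
    Zann K ρ β h m
      ≤ Real.exp ((m : ℝ) * (|h| + β ^ 2 / 2 + β ^ 2 * ∑' n : ℕ, |ρ (n + 1)|)) := by
  set C := |h| + β ^ 2 / 2 + β ^ 2 * ∑' n : ℕ, |ρ (n + 1)| with hC
  have hXe : ∀ c : Composition m, Xe ρ β h c ≤ (m : ℝ) * C := by
    intro c
    have hlen : (c.length : ℝ) ≤ (m : ℝ) ∨ m = 0 := by
      rcases Nat.eq_zero_or_pos m with h0 | h0
      · right; exact h0
      · left; exact_mod_cast c.length_le
    have hlen' : (c.length : ℝ) ≤ (m : ℝ) := by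
      rcases hlen with h1 | h1
      · exact h1
      · subst h1
        have := comp_zero_length c
        simp [this]
    have h1 : (c.length : ℝ) * (h + β ^ 2 / 2) ≤ (m : ℝ) * (|h| + β ^ 2 / 2) := by
      have hh : h + β ^ 2 / 2 ≤ |h| + β ^ 2 / 2 := by
        have := le_abs_self h; linarith
      have hnn : (0:ℝ) ≤ c.length := Nat.cast_nonneg _
      have hmn : (0:ℝ) ≤ m := Nat.cast_nonneg _
      rcases le_or_gt (h + β ^ 2 / 2) 0 with hc | hc
      · calc (c.length : ℝ) * (h + β ^ 2 / 2) ≤ 0 := mul_nonpos_of_nonneg_of_nonpos hnn hc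
          _ ≤ (m : ℝ) * (|h| + β ^ 2 / 2) := by positivity
      · calc (c.length : ℝ) * (h + β ^ 2 / 2) ≤ (m : ℝ) * (h + β ^ 2 / 2) :=
            mul_le_mul_of_nonneg_right hlen' hc.le
          _ ≤ (m : ℝ) * (|h| + β ^ 2 / 2) := mul_le_mul_of_nonneg_left hh hmn
    have h2 : β ^ 2 * pairS ρ c ≤ (m : ℝ) * (β ^ 2 * ∑' n : ℕ, |ρ (n + 1)|) := by
      have hMnn : (0:ℝ) ≤ ∑' n : ℕ, |ρ (n + 1)| := tsum_nonneg fun n => abs_nonneg _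
      calc β ^ 2 * pairS ρ c
          ≤ β ^ 2 * ((c.length : ℝ) * ∑' n : ℕ, |ρ (n + 1)|) :=
            mul_le_mul_of_nonneg_left (pairS_le ρ hρ c) (sq_nonneg β)
        _ ≤ β ^ 2 * ((m : ℝ) * ∑' n : ℕ, |ρ (n + 1)|) := by
            apply mul_le_mul_of_nonneg_left _ (sq_nonneg β)
            exact mul_le_mul_of_nonneg_right hlen' hMnn
        _ = (m : ℝ) * (β ^ 2 * ∑' n : ℕ, |ρ (n + 1)|) := by ring
    rw [Xe, hC]
    have := add_le_add h1 h2
    linarith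
  have hPw : ∑ c : Composition m, Pw K c ≤ 1 := by
    rw [← Z0, Z0_eq]
    exact u_le_one K hKpos hKsum m
  calc Zann K ρ β h m = ∑ c : Composition m, Real.exp (Xe ρ β h c) * Pw K c := rfl
    _ ≤ ∑ c : Composition m, Real.exp ((m : ℝ) * C) * Pw K c := by
        apply Finset.sum_le_sum
        intro c _
        exact mul_le_mul_of_nonneg_right (Real.exp_le_exp.2 (hXe c)) (Pw_nonneg K hKpos c)
    _ = Real.exp ((m : ℝ) * C) * ∑ c : Composition m, Pw K c := by rw [Finset.mul_sum]
    _ ≤ Real.exp ((m : ℝ) * C) * 1 :=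
        mul_le_mul_of_nonneg_left hPw (Real.exp_pos _).le
    _ = Real.exp ((m : ℝ) * C) := mul_one _

lemma Zfree_le (hKpos : ∀ n : ℕ, 1 ≤ n → 0 < K n)
    (hKsum : HasSum (fun n : ℕ => K (n + 1)) 1)
    (hρ : Summable fun n : ℕ => |ρ (n + 1)|) (β h : ℝ) (n : ℕ) :
    Zfree K ρ β h n ≤ ((n : ℝ) + 1)
      * Real.exp ((n : ℝ) * (|h| + β ^ 2 / 2 + β ^ 2 * ∑' k : ℕ, |ρ (k + 1)| + 1)) := by
  set C := |h| + β ^ 2 / 2 + β ^ 2 * ∑' k : ℕ, |ρ (k + 1)| with hC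
  have hCnn : 0 ≤ C + 1 := by
    have h1 : (0:ℝ) ≤ |h| := abs_nonneg _
    have h2 : (0:ℝ) ≤ β ^ 2 := sq_nonneg _
    have h3 : (0:ℝ) ≤ ∑' k : ℕ, |ρ (k + 1)| := tsum_nonneg fun k => abs_nonneg _
    have h4 : (0:ℝ) ≤ β ^ 2 * ∑' k : ℕ, |ρ (k + 1)| := mul_nonneg h2 h3
    rw [hC]; linarith
  calc Zfree K ρ β h n = ∑ m ∈ range (n + 1), Zann K ρ β h m * tailK K (n - m) :=
        Zfree_eq K ρ β h n
    _ ≤ ∑ m ∈ range (n + 1), Real.exp ((n : ℝ) * (C + 1)) := by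
        apply Finset.sum_le_sum
        intro m hm
        rw [Finset.mem_range] at hm
        calc Zann K ρ β h m * tailK K (n - m)
            ≤ Zann K ρ β h m * 1 :=
              mul_le_mul_of_nonneg_left (tailK_le_one K hKpos hKsum _)
                (Zann_nonneg K ρ β h hKpos m)
          _ = Zann K ρ β h m := mul_one _
          _ ≤ Real.exp ((m : ℝ) * C) := Zann_le K ρ hKpos hKsum hρ β h m
          _ ≤ Real.exp ((n : ℝ) * (C + 1)) := by
              apply Real.exp_le_exp.2
              have hm' : (m : ℝ) ≤ (n : ℝ) := by exact_mod_cast Nat.lt_succ_iff.1 hm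
              have hnn : (0:ℝ) ≤ (n : ℝ) := Nat.cast_nonneg _
              rcases le_or_gt C 0 with hc | hc
              · have : (m:ℝ) * C ≤ 0 := mul_nonpos_of_nonneg_of_nonpos (Nat.cast_nonneg _) hc
                have : (0:ℝ) ≤ (n:ℝ) * (C + 1) := mul_nonneg hnn hCnn
                linarith
              · nlinarith
    _ = ((n : ℝ) + 1) * Real.exp ((n : ℝ) * (C + 1)) := by
        rw [Finset.sum_const, Finset.card_range, nsmul_eq_mul]
        push_cast
        ring

/-! ### Elementary renewal asymptotics -/

/-- partial sums of the tail sequence -/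
noncomputable def TKp (r : ℕ) : ℝ := ∑ j ∈ range (r + 1), tailK K j

/-- partial sums of the renewal mass -/
noncomputable def Uf (n : ℕ) : ℝ := ∑ t ∈ range (n + 1), renewalMass K t

lemma TKp_succ (r : ℕ) : TKp K (r + 1) = TKp K r + tailK K (r + 1) := by
  rw [TKp, TKp, Finset.sum_range_succ]

lemma TKp_eq (hKsum : HasSum (fun n : ℕ => K (n + 1)) 1) (r : ℕ) :
    TKp K r = (∑ i ∈ range r, ((i : ℝ) + 1) * K (i + 1)) + ((r : ℝ) + 1) * tailK K r := by
  induction r with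
  | zero =>
    rw [TKp]
    simp
  | succ r ih =>
    rw [TKp_succ, ih, Finset.sum_range_succ, tailK_succ K hKsum r]
    push_cast
    ring

lemma tail_null (hKpos : ∀ n : ℕ, 1 ≤ n → 0 < K n)
    (hKsum : HasSum (fun n : ℕ => K (n + 1)) 1)
    (hKmean : Summable fun n : ℕ => ((n : ℝ) + 1) * K (n + 1)) :
    Tendsto (fun r : ℕ => ((r : ℝ) + 1) * tailK K r) atTop (𝓝 0) := by
  have hg : ∀ r : ℕ, ((r : ℝ) + 1) * tailK K r
      ≤ ∑' l : ℕ, ((((l + r) : ℕ) : ℝ) + 1) * K ((l + r) + 1) := by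
    intro r
    rw [tailK, ← tsum_mul_left]
    apply Summable.tsum_le_tsum _ ((summable_shift K hKsum r).mul_left _)
      ((summable_nat_add_iff r).2 hKmean)
    intro l
    have h1 : r + 1 + l = (l + r) + 1 := by omega
    rw [h1]
    apply mul_le_mul_of_nonneg_right _ (hKpos _ (by omega)).le
    push_cast
    linarith
  have h0 : ∀ r : ℕ, 0 ≤ ((r : ℝ) + 1) * tailK K r := by
    intro r
    apply mul_nonneg _ (tailK_nonneg K hKpos r)
    positivity
  exact squeeze_zero h0 hg
    (tendsto_sum_nat_add (fun n : ℕ => ((n : ℝ) + 1) * K (n + 1)))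

lemma TKp_tendsto (hKpos : ∀ n : ℕ, 1 ≤ n → 0 < K n)
    (hKsum : HasSum (fun n : ℕ => K (n + 1)) 1)
    (hKmean : Summable fun n : ℕ => ((n : ℝ) + 1) * K (n + 1)) :
    Tendsto (TKp K) atTop (𝓝 (∑' n : ℕ, ((n : ℝ) + 1) * K (n + 1))) := by
  have h1 := (hKmean.hasSum.tendsto_sum_nat).add (tail_null K hKpos hKsum hKmean)
  rw [add_zero] at h1
  exact h1.congr fun r => (TKp_eq K hKsum r).symm

lemma TKp_mono (hKpos : ∀ n : ℕ, 1 ≤ n → 0 < K n) : Monotone (TKp K) :=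
  monotone_nat_of_le_succ fun r => by
    rw [TKp_succ]
    exact le_add_of_nonneg_right (tailK_nonneg K hKpos _)

lemma TKp_le_m (hKpos : ∀ n : ℕ, 1 ≤ n → 0 < K n)
    (hKsum : HasSum (fun n : ℕ => K (n + 1)) 1)
    (hKmean : Summable fun n : ℕ => ((n : ℝ) + 1) * K (n + 1)) (r : ℕ) :
    TKp K r ≤ ∑' n : ℕ, ((n : ℝ) + 1) * K (n + 1) :=
  Monotone.ge_of_tendsto (TKp_mono K hKpos) (TKp_tendsto K hKpos hKsum hKmean) r

lemma TKp_one_le (hKpos : ∀ n : ℕ, 1 ≤ n → 0 < K n)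
    (hKsum : HasSum (fun n : ℕ => K (n + 1)) 1) (r : ℕ) : 1 ≤ TKp K r := by
  have h0 : TKp K 0 = 1 := by
    rw [TKp]
    simp [tailK_zero K hKsum]
  calc (1 : ℝ) = TKp K 0 := h0.symm
    _ ≤ TKp K r := TKp_mono K hKpos (Nat.zero_le r)

lemma m_ge_one (hKpos : ∀ n : ℕ, 1 ≤ n → 0 < K n)
    (hKsum : HasSum (fun n : ℕ => K (n + 1)) 1)
    (hKmean : Summable fun n : ℕ => ((n : ℝ) + 1) * K (n + 1)) :
    1 ≤ ∑' n : ℕ, ((n : ℝ) + 1) * K (n + 1) := by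
  calc (1:ℝ) = ∑' n : ℕ, K (n + 1) := hKsum.tsum_eq.symm
    _ ≤ ∑' n : ℕ, ((n : ℝ) + 1) * K (n + 1) := by
        apply Summable.tsum_le_tsum _ hKsum.summable hKmean
        intro n
        have h1 : (0:ℝ) ≤ K (n + 1) := (hKpos _ (by omega)).le
        nlinarith [Nat.cast_nonneg (α := ℝ) n]

lemma renewal_TK_id (hKpos : ∀ n : ℕ, 1 ≤ n → 0 < K n)
    (hKsum : HasSum (fun n : ℕ => K (n + 1)) 1) (n : ℕ) :
    ∑ t ∈ range (n + 1), renewalMass K t * TKp K (n - t) = (n : ℝ) + 1 := by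
  induction n with
  | zero =>
    rw [Finset.sum_range_one]
    have h0 : TKp K 0 = 1 := by rw [TKp]; simp [tailK_zero K hKsum]
    rw [h0]
    simp [renewalMass]
  | succ n ih =>
    have hTK0 : TKp K 0 = 1 := by rw [TKp]; simp [tailK_zero K hKsum]
    have hsplit : ∀ t ∈ range (n + 1),
        renewalMass K t * TKp K (n + 1 - t)
          = renewalMass K t * TKp K (n - t) + renewalMass K t * tailK K (n + 1 - t) := by
      intro t ht
      rw [Finset.mem_range] at ht
      have h1 : n + 1 - t = (n - t) + 1 := by omega
      rw [h1, TKp_succ, ← h1]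
      ring
    have hren := renewal_id K hKsum (n + 1)
    rw [Finset.sum_range_succ, Nat.sub_self, tailK_zero K hKsum, mul_one] at hren
    rw [Finset.sum_range_succ, Finset.sum_congr rfl hsplit, Finset.sum_add_distrib, ih,
      Nat.sub_self, hTK0, mul_one]
    push_cast
    linarith

lemma U_lower (hKpos : ∀ n : ℕ, 1 ≤ n → 0 < K n)
    (hKsum : HasSum (fun n : ℕ => K (n + 1)) 1)
    (hKmean : Summable fun n : ℕ => ((n : ℝ) + 1) * K (n + 1)) (n : ℕ) :
    (n : ℝ) + 1 ≤ (∑' k : ℕ, ((k : ℝ) + 1) * K (k + 1)) * Uf K n := by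
  rw [← renewal_TK_id K hKpos hKsum n, Uf, Finset.mul_sum]
  apply Finset.sum_le_sum
  intro t _
  rw [mul_comm (∑' k : ℕ, ((k : ℝ) + 1) * K (k + 1)) (renewalMass K t)]
  exact mul_le_mul_of_nonneg_left (TKp_le_m K hKpos hKsum hKmean _) (u_nonneg K hKpos t)

lemma U_upper (hKpos : ∀ n : ℕ, 1 ≤ n → 0 < K n)
    (hKsum : HasSum (fun n : ℕ => K (n + 1)) 1) (R n : ℕ) (hR : R ≤ n) :
    TKp K R * Uf K n ≤ ((n : ℝ) + 1) + TKp K R * R := by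
  have hTnn : 0 ≤ TKp K R := by linarith [TKp_one_le K hKpos hKsum R]
  have h1 : TKp K R * (∑ t ∈ range (n + 1 - R), renewalMass K t) ≤ (n : ℝ) + 1 := by
    rw [← renewal_TK_id K hKpos hKsum n, Finset.mul_sum]
    calc ∑ t ∈ range (n + 1 - R), TKp K R * renewalMass K t
        ≤ ∑ t ∈ range (n + 1 - R), renewalMass K t * TKp K (n - t) := by
          apply Finset.sum_le_sum
          intro t ht
          rw [Finset.mem_range] at ht
          rw [mul_comm]
          exact mul_le_mul_of_nonneg_left (TKp_mono K hKpos (by omega : R ≤ n - t))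
            (u_nonneg K hKpos t)
      _ ≤ ∑ t ∈ range (n + 1), renewalMass K t * TKp K (n - t) := by
          apply Finset.sum_le_sum_of_subset_of_nonneg
            (Finset.range_subset_range.2 (by omega))
          intro t _ _
          exact mul_nonneg (u_nonneg K hKpos t)
            (by linarith [TKp_one_le K hKpos hKsum (n - t)])
  have h2 : Uf K n = (∑ t ∈ range (n + 1 - R), renewalMass K t)
      + ∑ t ∈ Ico (n + 1 - R) (n + 1), renewalMass K t := by
    rw [Uf, Finset.sum_range_add_sum_Ico _ (by omega : n + 1 - R ≤ n + 1)]
  have h3 : ∑ t ∈ Ico (n + 1 - R) (n + 1), renewalMass K t ≤ (R : ℝ) := by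
    calc ∑ t ∈ Ico (n + 1 - R) (n + 1), renewalMass K t
        ≤ #(Ico (n + 1 - R) (n + 1)) • (1 : ℝ) :=
          Finset.sum_le_card_nsmul _ _ _ (fun t _ => u_le_one K hKpos hKsum t)
      _ = (R : ℝ) := by
          rw [Nat.card_Ico, nsmul_eq_mul, mul_one]
          congr 1
          omega
  have h4 : TKp K R * (∑ t ∈ Ico (n + 1 - R) (n + 1), renewalMass K t)
      ≤ TKp K R * R := mul_le_mul_of_nonneg_left h3 hTnn
  calc TKp K R * Uf K n
      = TKp K R * (∑ t ∈ range (n + 1 - R), renewalMass K t)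
        + TKp K R * (∑ t ∈ Ico (n + 1 - R) (n + 1), renewalMass K t) := by
        rw [h2]; ring
    _ ≤ ((n : ℝ) + 1) + TKp K R * R := add_le_add h1 h4

lemma tendsto_Uf (hKpos : ∀ n : ℕ, 1 ≤ n → 0 < K n)
    (hKsum : HasSum (fun n : ℕ => K (n + 1)) 1)
    (hKmean : Summable fun n : ℕ => ((n : ℝ) + 1) * K (n + 1)) :
    Tendsto (fun n : ℕ => Uf K n / n) atTop
      (𝓝 (1 / ∑' k : ℕ, ((k : ℝ) + 1) * K (k + 1))) := by
  set mI := ∑' k : ℕ, ((k : ℝ) + 1) * K (k + 1) with hmI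
  have hm1 : (1 : ℝ) ≤ mI := m_ge_one K hKpos hKsum hKmean
  have hmpos : 0 < mI := by linarith
  rw [Metric.tendsto_atTop]
  intro ε hε
  have hTKinv : Tendsto (fun r : ℕ => (TKp K r)⁻¹) atTop (𝓝 mI⁻¹) :=
    (TKp_tendsto K hKpos hKsum hKmean).inv₀ (ne_of_gt hmpos)
  have hev : ∀ᶠ r in atTop, (TKp K r)⁻¹ < mI⁻¹ + ε / 2 :=
    (tendsto_order.1 hTKinv).2 _ (by linarith)
  obtain ⟨R, hR⟩ := hev.exists
  obtain ⟨N0, hN0⟩ := exists_nat_gt (2 * ((R : ℝ) + 1) / ε)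
  refine ⟨max (max N0 R) 1, fun n hn => ?_⟩
  have hnR : R ≤ n := le_trans (le_max_of_le_left (le_max_right _ _)) hn
  have hn1 : 1 ≤ n := le_trans (le_max_right _ _) hn
  have hnN0 : N0 ≤ n := le_trans (le_max_of_le_left (le_max_left _ _)) hn
  have hx1 : (1 : ℝ) ≤ (n : ℝ) := by exact_mod_cast hn1
  have hxpos : (0 : ℝ) < (n : ℝ) := by linarith
  have hNn : 2 * ((R : ℝ) + 1) < ε * n := by
    have h5 : 2 * ((R : ℝ) + 1) < ε * N0 := by
      rw [div_lt_iff₀ hε] at hN0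
      linarith [hN0]
    have h6 : (N0 : ℝ) ≤ (n : ℝ) := by exact_mod_cast hnN0
    nlinarith
  have hlow := U_lower K hKpos hKsum hKmean n
  have hupp := U_upper K hKpos hKsum R n hnR
  have hT1 : 1 ≤ TKp K R := TKp_one_le K hKpos hKsum R
  have hTpos : 0 < TKp K R := by linarith
  have hUnn : 0 ≤ Uf K n :=
    Finset.sum_nonneg fun t _ => u_nonneg K hKpos t
  rw [Real.dist_eq, abs_lt]
  have h1mI : 1 / mI = mI⁻¹ := one_div _
  constructor
  · -- lower bound
    have h6 : (n : ℝ) ≤ mI * Uf K n := by rw [← hmI] at hlow; linarith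
    have h7 : mI⁻¹ * n ≤ Uf K n := by
      calc mI⁻¹ * n ≤ mI⁻¹ * (mI * Uf K n) :=
            mul_le_mul_of_nonneg_left h6 (inv_nonneg.2 hmpos.le)
        _ = Uf K n := by field_simp
    have h8 : mI⁻¹ ≤ Uf K n / n := by
      rw [le_div_iff₀ hxpos]
      linarith
    linarith
  · -- upper bound
    have e1 : (TKp K R)⁻¹ * (TKp K R * Uf K n) = Uf K n := by
      field_simp
    have e2 : (TKp K R)⁻¹ * (((n : ℝ) + 1) + TKp K R * R)
        = (n : ℝ) * (TKp K R)⁻¹ + (TKp K R)⁻¹ + R := by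
      field_simp
    have h9 := mul_le_mul_of_nonneg_left hupp (inv_nonneg.2 hTpos.le)
    rw [e1, e2] at h9
    have hTinv1 : (TKp K R)⁻¹ ≤ 1 := by
      rw [← one_div]
      exact (div_le_one hTpos).2 hT1
    have h10 : (n : ℝ) * (TKp K R)⁻¹ ≤ (n : ℝ) * (mI⁻¹ + ε / 2) :=
      mul_le_mul_of_nonneg_left hR.le (by linarith)
    have h11 : Uf K n ≤ (n : ℝ) * mI⁻¹ + (n : ℝ) * (ε / 2) + 1 + R := by
      nlinarith
    have h12 : Uf K n / n < mI⁻¹ + ε := by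
      rw [div_lt_iff₀ hxpos]
      nlinarith
    linarith

lemma tendsto_U1 (hKpos : ∀ n : ℕ, 1 ≤ n → 0 < K n)
    (hKsum : HasSum (fun n : ℕ => K (n + 1)) 1)
    (hKmean : Summable fun n : ℕ => ((n : ℝ) + 1) * K (n + 1)) :
    Tendsto (fun n : ℕ => (∑ t ∈ Icc 1 n, renewalMass K t) / n) atTop
      (𝓝 (1 / ∑' k : ℕ, ((k : ℝ) + 1) * K (k + 1))) := by
  have hU1 : ∀ n : ℕ, ∑ t ∈ Icc 1 n, renewalMass K t = Uf K n - 1 := by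
    intro n
    have hins : range (n + 1) = insert 0 (Icc 1 n) := by
      ext x
      simp only [Finset.mem_range, Finset.mem_insert, Finset.mem_Icc]
      omega
    have h1 : Uf K n = 1 + ∑ t ∈ Icc 1 n, renewalMass K t := by
      rw [Uf, hins, Finset.sum_insert (by simp)]
      congr 1
      rw [renewalMass]
    linarith
  have h1 := (tendsto_Uf K hKpos hKsum hKmean).sub tendsto_one_div_atTop_nhds_zero_nat
  rw [sub_zero] at h1
  apply h1.congr
  intro n
  rw [hU1 n, sub_div]

/-- partial correlation sums -/
noncomputable def cRho (r : ℕ) : ℝ := ∑ d ∈ Icc 1 r, ρ d * renewalMass K d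

lemma cRho_eq_range (r : ℕ) :
    cRho K ρ r = ∑ i ∈ range r, ρ (i + 1) * renewalMass K (i + 1) := by
  rw [cRho, ← Finset.Ico_add_one_right_eq_Icc, Finset.sum_Ico_eq_sum_range]
  apply Finset.sum_congr rfl
  intro i _
  rw [add_comm 1 i]

lemma summable_q (hKpos : ∀ n : ℕ, 1 ≤ n → 0 < K n)
    (hKsum : HasSum (fun n : ℕ => K (n + 1)) 1)
    (hρ : Summable fun n : ℕ => |ρ (n + 1)|) :
    Summable (fun n : ℕ => ρ (n + 1) * renewalMass K (n + 1)) := by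
  apply Summable.of_abs
  apply Summable.of_nonneg_of_le (fun n => abs_nonneg _) _ hρ
  intro n
  rw [abs_mul]
  calc |ρ (n + 1)| * |renewalMass K (n + 1)| ≤ |ρ (n + 1)| * 1 := by
        apply mul_le_mul_of_nonneg_left _ (abs_nonneg _)
        rw [abs_of_nonneg (u_nonneg K hKpos _)]
        exact u_le_one K hKpos hKsum _
    _ = |ρ (n + 1)| := mul_one _

/-- tail of the correlation series -/
noncomputable def tl (r : ℕ) : ℝ := ∑' i : ℕ, |ρ (i + r + 1)|

lemma summable_rho_shift (hρ : Summable fun n : ℕ => |ρ (n + 1)|) (r : ℕ) :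
    Summable (fun i : ℕ => |ρ (i + r + 1)|) :=
  (summable_nat_add_iff (f := fun n => |ρ (n + 1)|) r).2 hρ

lemma tl_nonneg (r : ℕ) : 0 ≤ tl ρ r := tsum_nonneg fun i => abs_nonneg _

lemma tl_succ (hρ : Summable fun n : ℕ => |ρ (n + 1)|) (r : ℕ) :
    tl ρ r = |ρ (r + 1)| + tl ρ (r + 1) := by
  rw [tl, Summable.tsum_eq_zero_add (summable_rho_shift ρ hρ r)]
  congr 1
  · congr 2
    omega
  · rw [tl]
    apply tsum_congr
    intro i
    congr 2
    omega

lemma tl_anti (hρ : Summable fun n : ℕ => |ρ (n + 1)|) : Antitone (tl ρ) := by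
  apply antitone_nat_of_succ_le
  intro r
  have := tl_succ ρ hρ r
  have h2 := abs_nonneg (ρ (r + 1))
  linarith

lemma tl_tendsto (hρ : Summable fun n : ℕ => |ρ (n + 1)|) :
    Tendsto (tl ρ) atTop (𝓝 0) := by
  have h1 := tendsto_sum_nat_add (fun n : ℕ => |ρ (n + 1)|)
  exact h1.congr fun r => by rw [tl]

lemma err_le (hKpos : ∀ n : ℕ, 1 ≤ n → 0 < K n)
    (hKsum : HasSum (fun n : ℕ => K (n + 1)) 1)
    (hρ : Summable fun n : ℕ => |ρ (n + 1)|) (r : ℕ) :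
    |(∑' n : ℕ, ρ (n + 1) * renewalMass K (n + 1)) - cRho K ρ r| ≤ tl ρ r := by
  have hq := summable_q K ρ hKpos hKsum hρ
  have h2 := Summable.sum_add_tsum_nat_add (f := fun n => ρ (n + 1) * renewalMass K (n + 1)) r hq
  have h3 : (∑' n : ℕ, ρ (n + 1) * renewalMass K (n + 1)) - cRho K ρ r
      = ∑' i : ℕ, ρ (i + r + 1) * renewalMass K (i + r + 1) := by
    rw [cRho_eq_range]
    linarith [h2]
  rw [h3]
  have hs1 : Summable (fun i : ℕ => ρ (i + r + 1) * renewalMass K (i + r + 1)) :=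
    (summable_nat_add_iff (f := fun n => ρ (n + 1) * renewalMass K (n + 1)) r).2 hq
  calc |∑' i : ℕ, ρ (i + r + 1) * renewalMass K (i + r + 1)|
      ≤ ∑' i : ℕ, |ρ (i + r + 1)| * |renewalMass K (i + r + 1)| := by
        have := norm_tsum_le_tsum_norm (f := fun i => ρ (i + r + 1) * renewalMass K (i + r + 1))
          (by
            apply Summable.of_nonneg_of_le (fun i => norm_nonneg _) _
              (summable_rho_shift ρ hρ r)
            intro i
            rw [Real.norm_eq_abs, abs_mul]
            calc |ρ (i + r + 1)| * |renewalMass K (i + r + 1)| ≤ |ρ (i + r + 1)| * 1 := by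
                  apply mul_le_mul_of_nonneg_left _ (abs_nonneg _)
                  rw [abs_of_nonneg (u_nonneg K hKpos _)]
                  exact u_le_one K hKpos hKsum _
              _ = |ρ (i + r + 1)| := mul_one _)
        simpa [Real.norm_eq_abs, abs_mul] using this
    _ ≤ ∑' i : ℕ, |ρ (i + r + 1)| := by
        apply Summable.tsum_le_tsum _ _ (summable_rho_shift ρ hρ r)
        · intro i
          calc |ρ (i + r + 1)| * |renewalMass K (i + r + 1)| ≤ |ρ (i + r + 1)| * 1 := by
                apply mul_le_mul_of_nonneg_left _ (abs_nonneg _)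
                rw [abs_of_nonneg (u_nonneg K hKpos _)]
                exact u_le_one K hKpos hKsum _
            _ = |ρ (i + r + 1)| := mul_one _
        · have := hs1.abs
          exact this.congr fun i => by rw [abs_mul]
    _ = tl ρ r := rfl

lemma tendsto_En (hKpos : ∀ n : ℕ, 1 ≤ n → 0 < K n)
    (hKsum : HasSum (fun n : ℕ => K (n + 1)) 1)
    (hρ : Summable fun n : ℕ => |ρ (n + 1)|) :
    Tendsto (fun n : ℕ => (∑ s ∈ Icc 1 n, renewalMass K s
      * (cRho K ρ (n - s) - ∑' k : ℕ, ρ (k + 1) * renewalMass K (k + 1))) / n)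
      atTop (𝓝 0) := by
  set cI := ∑' k : ℕ, ρ (k + 1) * renewalMass K (k + 1) with hcI
  set M := tl ρ 0 with hM
  have hMnn : 0 ≤ M := tl_nonneg ρ 0
  have herr : ∀ r : ℕ, |cRho K ρ r - cI| ≤ tl ρ r := by
    intro r
    rw [abs_sub_comm]
    exact err_le K ρ hKpos hKsum hρ r
  rw [Metric.tendsto_atTop]
  intro ε hε
  have hev : ∀ᶠ r in atTop, tl ρ r < ε / 2 := by
    have := (tendsto_order.1 (tl_tendsto ρ hρ)).2 (ε / 2) (by linarith)
    exact this
  obtain ⟨R, hR⟩ := hev.exists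
  obtain ⟨N0, hN0⟩ := exists_nat_gt (2 * ((R : ℝ) * M + 1) / ε)
  refine ⟨max (max N0 R) 1, fun n hn => ?_⟩
  have hnR : R ≤ n := le_trans (le_max_of_le_left (le_max_right _ _)) hn
  have hn1 : 1 ≤ n := le_trans (le_max_right _ _) hn
  have hnN0 : N0 ≤ n := le_trans (le_max_of_le_left (le_max_left _ _)) hn
  have hx1 : (1 : ℝ) ≤ (n : ℝ) := by exact_mod_cast hn1
  have hxpos : (0 : ℝ) < (n : ℝ) := by linarith
  set En := ∑ s ∈ Icc 1 n, renewalMass K s * (cRho K ρ (n - s) - cI) with hEn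
  have hterm : ∀ s : ℕ, |renewalMass K s * (cRho K ρ (n - s) - cI)| ≤ tl ρ (n - s) := by
    intro s
    rw [abs_mul]
    calc |renewalMass K s| * |cRho K ρ (n - s) - cI|
        ≤ 1 * |cRho K ρ (n - s) - cI| := by
          apply mul_le_mul_of_nonneg_right _ (abs_nonneg _)
          rw [abs_of_nonneg (u_nonneg K hKpos _)]
          exact u_le_one K hKpos hKsum _
      _ = |cRho K ρ (n - s) - cI| := one_mul _
      _ ≤ tl ρ (n - s) := herr _
  have hsplit : En = (∑ s ∈ Ioc 0 (n - R), renewalMass K s * (cRho K ρ (n - s) - cI))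
      + ∑ s ∈ Ioc (n - R) n, renewalMass K s * (cRho K ρ (n - s) - cI) := by
    have hIoc : Icc 1 n = Ioc 0 n := by
      ext x
      simp only [Finset.mem_Icc, Finset.mem_Ioc]
      omega
    rw [hEn, hIoc,
      ← Finset.sum_Ioc_consecutive _ (Nat.zero_le (n - R)) (Nat.sub_le n R)]
  have h1 : |∑ s ∈ Ioc 0 (n - R), renewalMass K s * (cRho K ρ (n - s) - cI)|
      ≤ (n : ℝ) * (ε / 2) := by
    calc |∑ s ∈ Ioc 0 (n - R), renewalMass K s * (cRho K ρ (n - s) - cI)|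
        ≤ ∑ s ∈ Ioc 0 (n - R), |renewalMass K s * (cRho K ρ (n - s) - cI)| :=
          Finset.abs_sum_le_sum_abs _ _
      _ ≤ #(Ioc 0 (n - R)) • (ε / 2) := by
          apply Finset.sum_le_card_nsmul
          intro s hs
          rw [Finset.mem_Ioc] at hs
          calc |renewalMass K s * (cRho K ρ (n - s) - cI)| ≤ tl ρ (n - s) := hterm s
            _ ≤ tl ρ R := tl_anti ρ hρ (by omega)
            _ ≤ ε / 2 := hR.le
      _ ≤ (n : ℝ) * (ε / 2) := by
          rw [nsmul_eq_mul]
          apply mul_le_mul_of_nonneg_right _ (by linarith)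
          rw [Nat.card_Ioc]
          have : (n - R) - 0 ≤ n := by omega
          exact_mod_cast this
  have h2 : |∑ s ∈ Ioc (n - R) n, renewalMass K s * (cRho K ρ (n - s) - cI)|
      ≤ (R : ℝ) * M := by
    calc |∑ s ∈ Ioc (n - R) n, renewalMass K s * (cRho K ρ (n - s) - cI)|
        ≤ ∑ s ∈ Ioc (n - R) n, |renewalMass K s * (cRho K ρ (n - s) - cI)| :=
          Finset.abs_sum_le_sum_abs _ _
      _ ≤ #(Ioc (n - R) n) • M := by
          apply Finset.sum_le_card_nsmul
          intro s hs
          calc |renewalMass K s * (cRho K ρ (n - s) - cI)| ≤ tl ρ (n - s) := hterm s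
            _ ≤ tl ρ 0 := tl_anti ρ hρ (Nat.zero_le _)
      _ ≤ (R : ℝ) * M := by
          rw [nsmul_eq_mul]
          apply mul_le_mul_of_nonneg_right _ hMnn
          rw [Nat.card_Ioc]
          have : n - (n - R) ≤ R := by omega
          exact_mod_cast this
  have hEbound : |En| ≤ (n : ℝ) * (ε / 2) + (R : ℝ) * M := by
    rw [hsplit]
    calc |_ + _| ≤ _ + _ := abs_add_le _ _
      _ ≤ (n : ℝ) * (ε / 2) + (R : ℝ) * M := add_le_add h1 h2
  have hRM : (R : ℝ) * M < (ε / 2) * n := by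
    have h5 : 2 * ((R : ℝ) * M + 1) < ε * N0 := by
      rw [div_lt_iff₀ hε] at hN0
      linarith [hN0]
    have h6 : (N0 : ℝ) ≤ (n : ℝ) := by exact_mod_cast hnN0
    nlinarith
  rw [Real.dist_eq, sub_zero, abs_div, abs_of_pos hxpos, div_lt_iff₀ hxpos]
  calc |En| ≤ (n : ℝ) * (ε / 2) + (R : ℝ) * M := hEbound
    _ < (n : ℝ) * (ε / 2) + (ε / 2) * n := by linarith
    _ = ε * n := by ring

lemma tendsto_Cn (hKpos : ∀ n : ℕ, 1 ≤ n → 0 < K n)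
    (hKsum : HasSum (fun n : ℕ => K (n + 1)) 1)
    (hKmean : Summable fun n : ℕ => ((n : ℝ) + 1) * K (n + 1))
    (hρ : Summable fun n : ℕ => |ρ (n + 1)|) :
    Tendsto (fun n : ℕ => (∑ s ∈ Icc 1 n, renewalMass K s * cRho K ρ (n - s)) / n)
      atTop (𝓝 ((∑' k : ℕ, ρ (k + 1) * renewalMass K (k + 1))
        / ∑' k : ℕ, ((k : ℝ) + 1) * K (k + 1))) := by
  set cI := ∑' k : ℕ, ρ (k + 1) * renewalMass K (k + 1) with hcI
  set mI := ∑' k : ℕ, ((k : ℝ) + 1) * K (k + 1) with hmI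
  have hdec : ∀ n : ℕ, (∑ s ∈ Icc 1 n, renewalMass K s * cRho K ρ (n - s)) / n
      = cI * ((∑ t ∈ Icc 1 n, renewalMass K t) / n)
        + (∑ s ∈ Icc 1 n, renewalMass K s * (cRho K ρ (n - s) - cI)) / n := by
    intro n
    have h1 : ∑ s ∈ Icc 1 n, renewalMass K s * cRho K ρ (n - s)
        = cI * (∑ t ∈ Icc 1 n, renewalMass K t)
          + ∑ s ∈ Icc 1 n, renewalMass K s * (cRho K ρ (n - s) - cI) := by
      rw [Finset.mul_sum, ← Finset.sum_add_distrib]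
      apply Finset.sum_congr rfl
      intro s _
      ring
    rw [h1, add_div, mul_div_assoc]
  have h2 := ((tendsto_U1 K hKpos hKsum hKmean).const_mul cI).add
    (tendsto_En K ρ hKpos hKsum hρ)
  rw [add_zero] at h2
  have h3 : cI * (1 / mI) = cI / mI := by ring
  rw [h3] at h2
  exact h2.congr fun n => (hdec n).symm

end FELB

open Topology in
/-- Lower bound for the free annealed free energy when `m = Σ n K(n) < ∞`:
`liminf (1/n) log Z^{free}_n ≥ (1/m)(h + (β²/2)(1 + 2 Σ ρ(n) u(n)))`; in particular the
liminf is positive when `h > −(β²/2)(1 + 2 Σ ρ(n) u(n))`. -/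
theorem free_energy_lower_bound (K ρ : ℕ → ℝ)
    (hKpos : ∀ n : ℕ, 1 ≤ n → 0 < K n)
    (hKsum : HasSum (fun n : ℕ => K (n + 1)) 1)
    (hρ : Summable fun n : ℕ => |ρ (n + 1)|)
    (hKmean : Summable fun n : ℕ => ((n : ℝ) + 1) * K (n + 1))
    (β h : ℝ) (hβ : 0 ≤ β) :
    (1 / ∑' n : ℕ, ((n : ℝ) + 1) * K (n + 1)) *
        (h + β ^ 2 / 2 * (1 + 2 * ∑' n : ℕ, ρ (n + 1) * renewalMass K (n + 1)))
      ≤ Filter.liminf (fun n : ℕ => (1 / (n : ℝ)) * Real.log (Zfree K ρ β h n)) atTop ∧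
      (-(β ^ 2 / 2 * (1 + 2 * ∑' n : ℕ, ρ (n + 1) * renewalMass K (n + 1))) < h →
        0 < Filter.liminf (fun n : ℕ => (1 / (n : ℝ)) * Real.log (Zfree K ρ β h n)) atTop) := by
  classical
  set mI := ∑' n : ℕ, ((n : ℝ) + 1) * K (n + 1) with hmI
  set cI := ∑' n : ℕ, ρ (n + 1) * renewalMass K (n + 1) with hcI
  have hm1 : (1 : ℝ) ≤ mI := FELB.m_ge_one K hKpos hKsum hKmean
  have hmpos : (0 : ℝ) < mI := by linarith
  set τ := (1 / mI) * (h + β ^ 2 / 2 * (1 + 2 * cI)) with hτ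
  set f := fun n : ℕ => (1 / (n : ℝ)) * Real.log (Zfree K ρ β h n) with hf
  set g := fun n : ℕ =>
    ((h + β ^ 2 / 2) * (∑ t ∈ Finset.Icc 1 n, renewalMass K t)
      + β ^ 2 * (∑ s ∈ Finset.Icc 1 n, renewalMass K s
          * (∑ d ∈ Finset.Icc 1 (n - s), ρ d * renewalMass K d))) / n with hg
  -- convergence of the lower-bound sequence
  have hgconv : Tendsto g atTop (𝓝 τ) := by
    have h1 := ((FELB.tendsto_U1 K hKpos hKsum hKmean).const_mul (h + β ^ 2 / 2)).add
      ((FELB.tendsto_Cn K ρ hKpos hKsum hKmean hρ).const_mul (β ^ 2))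
    have hτeq : (h + β ^ 2 / 2) * (1 / mI) + β ^ 2 * (cI / mI) = τ := by
      rw [hτ]
      field_simp
      ring
    rw [hτeq] at h1
    apply h1.congr
    intro n
    show (h + β ^ 2 / 2) * ((∑ t ∈ Finset.Icc 1 n, renewalMass K t) / n)
        + β ^ 2 * ((∑ s ∈ Finset.Icc 1 n, renewalMass K s
            * (∑ d ∈ Finset.Icc 1 (n - s), ρ d * renewalMass K d)) / n)
      = ((h + β ^ 2 / 2) * (∑ t ∈ Finset.Icc 1 n, renewalMass K t)
          + β ^ 2 * (∑ s ∈ Finset.Icc 1 n, renewalMass K s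
              * (∑ d ∈ Finset.Icc 1 (n - s), ρ d * renewalMass K d))) / n
    rw [add_div, mul_div_assoc, mul_div_assoc]
  -- eventual lower bound on f
  have hle : ∀ᶠ n in atTop, g n ≤ f n := by
    rw [eventually_atTop]
    refine ⟨1, fun n hn => ?_⟩
    have hxpos : (0 : ℝ) < (n : ℝ) := by exact_mod_cast hn
    have hb := FELB.log_Zfree_bound K ρ β h hKpos hKsum n
    show ((h + β ^ 2 / 2) * (∑ t ∈ Finset.Icc 1 n, renewalMass K t)
          + β ^ 2 * (∑ s ∈ Finset.Icc 1 n, renewalMass K s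
              * (∑ d ∈ Finset.Icc 1 (n - s), ρ d * renewalMass K d))) / n
        ≤ (1 / (n : ℝ)) * Real.log (Zfree K ρ β h n)
    rw [one_div_mul_eq_div]
    gcongr
  -- eventual upper bound on f (for coboundedness)
  have hub : ∀ᶠ n in atTop, f n ≤ |h| + β ^ 2 / 2 + β ^ 2 * (∑' k : ℕ, |ρ (k + 1)|) + 3 := by
    rw [eventually_atTop]
    refine ⟨1, fun n hn => ?_⟩
    set C := |h| + β ^ 2 / 2 + β ^ 2 * (∑' k : ℕ, |ρ (k + 1)|) with hC
    have hxpos : (0 : ℝ) < (n : ℝ) := by exact_mod_cast hn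
    have hx1 : (1 : ℝ) ≤ (n : ℝ) := by exact_mod_cast hn
    have hZle := FELB.Zfree_le K ρ hKpos hKsum hρ β h n
    have hZpos := FELB.Zfree_pos K ρ β h hKpos hKsum n
    have hlog : Real.log (Zfree K ρ β h n) ≤ (n : ℝ) * (C + 2) := by
      calc Real.log (Zfree K ρ β h n)
          ≤ Real.log (((n : ℝ) + 1) * Real.exp ((n : ℝ) * (C + 1))) :=
            Real.log_le_log hZpos hZle
        _ = Real.log ((n : ℝ) + 1) + (n : ℝ) * (C + 1) := by
            rw [Real.log_mul (by positivity) (Real.exp_ne_zero _), Real.log_exp]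
        _ ≤ (n : ℝ) + (n : ℝ) * (C + 1) := by
            have := Real.log_le_sub_one_of_pos (show (0:ℝ) < (n : ℝ) + 1 by positivity)
            linarith
        _ = (n : ℝ) * (C + 2) := by ring
    show (1 / (n : ℝ)) * Real.log (Zfree K ρ β h n) ≤ C + 3
    have h3 : (1 / (n : ℝ)) * Real.log (Zfree K ρ β h n)
        ≤ (1 / (n : ℝ)) * ((n : ℝ) * (C + 2)) := by
      apply mul_le_mul_of_nonneg_left hlog
      positivity
    have h4 : (1 / (n : ℝ)) * ((n : ℝ) * (C + 2)) = C + 2 := by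
      field_simp
    have h5 : C + 2 ≤ C + 3 := by linarith
    calc (1 / (n : ℝ)) * Real.log (Zfree K ρ β h n) ≤ C + 2 := by rw [← h4]; exact h3
      _ ≤ C + 3 := h5
  have hcobdd : Filter.IsCoboundedUnder (· ≥ ·) atTop f :=
    Filter.IsBoundedUnder.isCoboundedUnder_ge ⟨_, hub⟩
  have hmain : τ ≤ Filter.liminf f atTop := by
    calc τ = Filter.liminf g atTop := (hgconv.liminf_eq).symm
      _ ≤ Filter.liminf f atTop :=
        Filter.liminf_le_liminf hle (hgconv.isBoundedUnder_ge) hcobdd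
  constructor
  · exact hmain
  · intro hh
    have hpos : 0 < h + β ^ 2 / 2 * (1 + 2 * cI) := by
      linarith
    have hτpos : 0 < τ := by
      rw [hτ]
      apply mul_pos _ hpos
      positivity
    exact lt_of_lt_of_le hτpos hmain
end

section
/- Suppose Σ_{n≥1} n|ρ(n)| < ∞ and fix β ≥ 0, h ∈ ℝ. Then for every p̄ ∈ Σ and every n ≥ 1: exp(−β² Σ_{k≥1} k|ρ(k)|) · 𝒵_n^{p̄}(β,h) ≤ Z̃_n(β,h) ≤ exp(β² Σ_{k≥1} k|ρ(k)|) · 𝒵_n^{p̄}(β,h). Consequently, for every p̄ ∈ Σ, the sequence (1/n) log 𝒵_n^{p̄}(β,h) converges to the annealed free energy F^a(β,h). -/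
open Real Filter Finset

/-- The space `Σ = (ℤ≥1)^ℕ` of sequences of positive integers. -/
abbrev SSeq : Type := ℕ → ℕ+

/-- The left shift `T` on `Σ`. -/
def shift (x : SSeq) : SSeq := fun i => x (i + 1)

/-- Concatenation `sx = (s, x_0, x_1, …)`. -/
def consSeq (s : ℕ+) (x : SSeq) : SSeq := fun i => match i with
  | 0 => s
  | j + 1 => x j

/-- The Birkhoff sum `φ_n = Σ_{k=0}^{n−1} φ∘T^k`. -/
noncomputable def birkhoff (φ : SSeq → ℝ) (n : ℕ) (x : SSeq) : ℝ :=
  ∑ k ∈ Finset.range n, φ (shift^[k] x)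

/-- The set of variations `{|φ(x) − φ(y)| : x_i = y_i for all i < n}`. -/
def varSet (φ : SSeq → ℝ) (n : ℕ) : Set ℝ :=
  {d | ∃ x y : SSeq, (∀ i < n, x i = y i) ∧ d = |φ x - φ y|}

/-- The `n`-th variation `V_n(φ)`. -/
noncomputable def Vn (φ : SSeq → ℝ) (n : ℕ) : ℝ := sSup (varSet φ n)

open scoped ENNReal in
/-- `Z_n(φ,a) = Σ_{x : T^n x = x, x_0 = a} e^{φ_n(x)}`, valued in `[0,∞]`. -/
noncomputable def Zg (φ : SSeq → ℝ) (a : ℕ+) (n : ℕ) : ℝ≥0∞ :=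
  ∑' x : {x : SSeq // shift^[n] x = x ∧ x 0 = a}, ENNReal.ofReal (Real.exp (birkhoff φ n x))

/-- `P` is the Gurevich pressure of `φ`: for every `a`,
`(1/n) log Z_n(φ,a) → P`. -/
def IsGurevich (φ : SSeq → ℝ) (P : ℝ) : Prop :=
  ∀ a : ℕ+, Tendsto (fun n : ℕ => (1 / (n : ℝ)) * Real.log (Zg φ a n).toReal) atTop (nhds P)

/-- The potential `G(t) = Σ_{k≥0} ρ(t_0+⋯+t_k)`. -/
noncomputable def Gpot (ρ : ℕ → ℝ) (t : SSeq) : ℝ :=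
  ∑' k : ℕ, ρ (∑ i ∈ Finset.range (k + 1), (t i : ℕ))

/-- The potential `φ_β = β²G + log K ∘ π_0`. -/
noncomputable def phiBeta (K ρ : ℕ → ℝ) (β : ℝ) (t : SSeq) : ℝ :=
  β ^ 2 * Gpot ρ t + Real.log (K (t 0))

/-- The modified annealed partition function, where the interaction also involves the
renewal point `τ_0 = 0`. -/
noncomputable def Ztilde (K ρ : ℕ → ℝ) (β h : ℝ) (n : ℕ) : ℝ :=
  ∑ c : Composition n,
    Real.exp ((c.length : ℝ) * (h + β ^ 2 / 2)
        + β ^ 2 * ∑ i ∈ Finset.range (c.length + 1), ∑ j ∈ Finset.range (c.length + 1),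
            if i < j then ρ (c.sizeUpTo j - c.sizeUpTo i) else 0)
      * ∏ i : Fin c.length, K (c.blocksFun i)

/-- The sequence `(l_{i+1}, l_i, …, l_1, p̄_0, p̄_1, …)` built from the first `i+1` blocks of
a composition (in reverse order) followed by the past `p̄`. -/
def pastSeq {n : ℕ} (c : Composition n) (p : SSeq) (i : Fin c.length) : SSeq := fun j =>
  if hj : j ≤ (i : ℕ) then
    ⟨c.blocksFun ⟨(i : ℕ) - j, lt_of_le_of_lt (Nat.sub_le _ _) i.isLt⟩,
      c.blocks_pos (c.blocksFun_mem_blocks _)⟩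
  else p (j - (i : ℕ) - 1)

/-- The annealed partition function with past `p̄`:
`𝒵_n^{p̄}(β,h) = Σ_k Σ_{l_1+⋯+l_k=n} ∏_i e^{h+β²/2+β²G(l_i⋯l_1 p̄)} K(l_i)`. -/
noncomputable def Zpast (K ρ : ℕ → ℝ) (β h : ℝ) (p : SSeq) (n : ℕ) : ℝ :=
  ∑ c : Composition n, ∏ i : Fin c.length,
    Real.exp (h + β ^ 2 / 2 + β ^ 2 * Gpot ρ (pastSeq c p i)) * K (c.blocksFun i)

namespace PWP

variable {ρ : ℕ → ℝ}

noncomputable def S (ρ : ℕ → ℝ) : ℝ := ∑' k : ℕ, ((k : ℝ) + 1) * |ρ (k + 1)|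

noncomputable def tailT (ρ : ℕ → ℝ) (a : ℕ) : ℝ := ∑' n : ℕ, |ρ (n + a + 1)|

lemma one_le_cast_succ (n : ℕ) : (1 : ℝ) ≤ (n : ℝ) + 1 := by
  have : (0:ℝ) ≤ (n:ℝ) := Nat.cast_nonneg n
  linarith

lemma S_nonneg : 0 ≤ S ρ := tsum_nonneg fun k => by positivity

section rho
variable (hρ : Summable fun n : ℕ => ((n : ℝ) + 1) * |ρ (n + 1)|)
include hρ

lemma habs : Summable fun n : ℕ => |ρ (n + 1)| :=
  Summable.of_nonneg_of_le (fun _ => abs_nonneg _)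
    (fun n => le_mul_of_one_le_left (abs_nonneg _) (one_le_cast_succ n)) hρ

lemma habs_shift (a : ℕ) : Summable fun n : ℕ => |ρ (n + a + 1)| :=
  (habs hρ).comp_injective (add_left_injective a)

lemma summable_abs_comp {u : ℕ → ℕ} (hu : Function.Injective u) (h1 : ∀ m, 1 ≤ u m) :
    Summable fun m => |ρ (u m)| := by
  have hinj : Function.Injective (fun m => u m - 1) := by
    intro a b hab
    simp only at hab
    have ha := h1 a; have hb := h1 b
    apply hu; omega
  exact ((habs hρ).comp_injective hinj).congr fun m => by
    simp only [Function.comp_apply]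
    rw [Nat.sub_add_cancel (h1 m)]

lemma summable_comp {u : ℕ → ℕ} (hu : Function.Injective u) (h1 : ∀ m, 1 ≤ u m) :
    Summable fun m => ρ (u m) :=
  (summable_abs_comp hρ hu h1).of_abs

lemma tsum_abs_comp_le {u : ℕ → ℕ} (hu : Function.Injective u) {a : ℕ}
    (ha : ∀ m, a + 1 ≤ u m) : (∑' m : ℕ, |ρ (u m)|) ≤ tailT ρ a := by
  refine Summable.tsum_le_tsum_of_inj (fun m => u m - (a + 1)) ?_ (fun c _ => abs_nonneg _) ?_
    (summable_abs_comp hρ hu (fun m => le_trans (by omega) (ha m))) (habs_shift hρ a)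
  · intro x y hxy
    simp only at hxy
    have hx := ha x; have hy := ha y
    apply hu; omega
  · intro m
    have : u m - (a + 1) + a + 1 = u m := by have := ha m; omega
    rw [this]

lemma summable_coeff_shift : Summable fun m : ℕ => ((m : ℝ) + 1) * |ρ (m + 2)| := by
  have h2 : Summable fun m : ℕ => (((m : ℝ) + 1) + 1) * |ρ (m + 2)| := by
    refine (hρ.comp_injective (add_left_injective 1)).congr fun m => by
      simp only [Function.comp_apply]; push_cast; ring_nf
  exact Summable.of_nonneg_of_le (fun m => by positivity)
    (fun m => mul_le_mul_of_nonneg_right (by linarith) (abs_nonneg _)) h2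

lemma sum_tailT_le (k : ℕ) : ∑ i ∈ Finset.range k, tailT ρ (i + 1) ≤ S ρ := by
  have hf : ∀ i : ℕ, Summable (fun m : ℕ => if i ≤ m then |ρ (m + 2)| else 0) := fun i =>
    Summable.of_nonneg_of_le (fun m => by positivity)
      (fun m => by split <;> simp [abs_nonneg]) (habs_shift hρ 1)
  have h1 : ∀ i : ℕ, tailT ρ (i + 1) = ∑' m : ℕ, if i ≤ m then |ρ (m + 2)| else 0 := by
    intro i
    have hsupp : Function.support (fun m : ℕ => if i ≤ m then |ρ (m + 2)| else 0)
        ⊆ Set.range (fun n : ℕ => n + i) := by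
      intro m hm
      have him : i ≤ m := by
        by_contra h
        simp only [Function.mem_support, if_neg h, ne_eq, not_true] at hm
      exact ⟨m - i, show m - i + i = m by omega⟩
    have heq := Function.Injective.tsum_eq (g := fun n : ℕ => n + i)
      (add_left_injective i) (f := fun m : ℕ => if i ≤ m then |ρ (m + 2)| else 0) hsupp
    rw [tailT, ← heq]
    refine tsum_congr fun n => ?_
    have hn : n + (i + 1) + 1 = n + i + 2 := by omega
    rw [hn, if_pos (Nat.le_add_left i n)]
  have hsum2 := summable_coeff_shift hρ
  calc ∑ i ∈ Finset.range k, tailT ρ (i + 1)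
      = ∑' m : ℕ, ∑ i ∈ Finset.range k, (if i ≤ m then |ρ (m + 2)| else 0) := by
        rw [Summable.tsum_finsetSum (fun i _ => hf i)]
        exact Finset.sum_congr rfl fun i _ => h1 i
    _ ≤ ∑' m : ℕ, ((m : ℝ) + 1) * |ρ (m + 2)| := by
        refine Summable.tsum_le_tsum ?_ (summable_sum fun i _ => hf i) hsum2
        intro m
        rw [← Finset.sum_filter, Finset.sum_const]
        have hcard : (Finset.filter (fun i => i ≤ m) (Finset.range k)).card ≤ m + 1 := by
          refine le_trans (Finset.card_le_card ?_) (le_of_eq (Finset.card_range (m+1)))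
          intro i hi
          simp only [Finset.mem_filter, Finset.mem_range] at hi ⊢
          omega
        rw [nsmul_eq_mul]
        refine mul_le_mul_of_nonneg_right ?_ (abs_nonneg _)
        exact_mod_cast hcard
    _ ≤ S ρ := by
        refine Summable.tsum_le_tsum_of_inj (fun m => m + 1) (add_left_injective 1)
          (fun c _ => by positivity) ?_ hsum2 hρ
        intro m
        refine mul_le_mul_of_nonneg_right ?_ (abs_nonneg _)
        push_cast; linarith

lemma tailT_le_S : tailT ρ 0 ≤ S ρ := by
  refine Summable.tsum_le_tsum ?_ (habs_shift hρ 0) hρ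
  intro n
  exact le_mul_of_one_le_left (abs_nonneg _) (one_le_cast_succ n)

end rho

section CompLemmas

variable {ρ : ℕ → ℝ}

/-- Partial sums of the sequence `pastSeq c p i`. -/
def Aseq {n : ℕ} (c : Composition n) (p : SSeq) (i : Fin c.length) (k : ℕ) : ℕ :=
  ∑ j ∈ Finset.range (k + 1), (pastSeq c p i j : ℕ)

lemma Aseq_succ {n : ℕ} (c : Composition n) (p : SSeq) (i : Fin c.length) (k : ℕ) :
    Aseq c p i (k + 1) = Aseq c p i k + (pastSeq c p i (k + 1) : ℕ) :=
  Finset.sum_range_succ _ _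

lemma Aseq_strictMono {n : ℕ} (c : Composition n) (p : SSeq) (i : Fin c.length) :
    StrictMono (Aseq c p i) :=
  strictMono_nat_of_lt_succ fun k => by
    rw [Aseq_succ]
    have : 0 < (pastSeq c p i (k + 1) : ℕ) := (pastSeq c p i (k + 1)).2
    omega

lemma lt_Aseq {n : ℕ} (c : Composition n) (p : SSeq) (i : Fin c.length) (k : ℕ) :
    k + 1 ≤ Aseq c p i k := by
  induction k with
  | zero =>
    have : 0 < (pastSeq c p i 0 : ℕ) := (pastSeq c p i 0).2
    have h0 : Aseq c p i 0 = (pastSeq c p i 0 : ℕ) := by simp [Aseq]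
    omega
  | succ k ih =>
    rw [Aseq_succ]
    have : 0 < (pastSeq c p i (k + 1) : ℕ) := (pastSeq c p i (k + 1)).2
    omega

lemma pastSeq_of_le {n : ℕ} (c : Composition n) (p : SSeq) (i : Fin c.length) {j : ℕ}
    (hj : j ≤ (i : ℕ)) :
    (pastSeq c p i j : ℕ)
      = c.blocksFun ⟨(i : ℕ) - j, lt_of_le_of_lt (Nat.sub_le _ _) i.isLt⟩ := by
  simp only [pastSeq, dif_pos hj]
  exact congrArg PNat.val (dif_pos hj)

lemma pastSeq_of_gt {n : ℕ} (c : Composition n) (p : SSeq) (i : Fin c.length) {j : ℕ}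
    (hj : ¬ j ≤ (i : ℕ)) :
    pastSeq c p i j = p (j - (i : ℕ) - 1) := by
  simp only [pastSeq, dif_neg hj]
  exact dif_neg hj

lemma Aseq_add_sizeUpTo {n : ℕ} (c : Composition n) (p : SSeq) (i : Fin c.length) :
    ∀ k, k ≤ (i : ℕ) →
      Aseq c p i k + c.sizeUpTo ((i : ℕ) - k) = c.sizeUpTo ((i : ℕ) + 1) := by
  intro k
  induction k with
  | zero =>
    intro _
    have h0 : Aseq c p i 0 = c.blocksFun ⟨(i : ℕ), i.isLt⟩ := by
      have ha : Aseq c p i 0 = (pastSeq c p i 0 : ℕ) := by simp [Aseq]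
      rw [ha, pastSeq_of_le c p i (Nat.zero_le _)]
      congr 1
    rw [h0, Nat.sub_zero, c.sizeUpTo_succ' i]
    have : (⟨(i : ℕ), i.isLt⟩ : Fin c.length) = i := rfl
    rw [this]
    omega
  | succ k ih =>
    intro hk
    have hk' : k ≤ (i : ℕ) := by omega
    have hlt : (i : ℕ) - (k + 1) < c.length := lt_of_le_of_lt (Nat.sub_le _ _) i.isLt
    have h3 := c.sizeUpTo_succ hlt
    have h4 : (pastSeq c p i (k + 1) : ℕ) = c.blocksFun ⟨(i : ℕ) - (k + 1), hlt⟩ :=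
      pastSeq_of_le c p i hk
    have hblocks : c.blocksFun ⟨(i : ℕ) - (k + 1), hlt⟩
        = c.blocks[(i : ℕ) - (k + 1)]'(by rw [c.blocks_length]; exact hlt) := rfl
    have h5 := ih hk'
    have h2 : (i : ℕ) - k = ((i : ℕ) - (k + 1)) + 1 := by omega
    rw [h2] at h5
    rw [Aseq_succ, h4, hblocks]
    omega

lemma Aseq_tail {n : ℕ} (c : Composition n) (p : SSeq) (i : Fin c.length) (m : ℕ) :
    Aseq c p i ((i : ℕ) + 1 + m)
      = c.sizeUpTo ((i : ℕ) + 1) + ∑ r ∈ Finset.range (m + 1), (p r : ℕ) := by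
  induction m with
  | zero =>
    have h0 := Aseq_add_sizeUpTo c p i (i : ℕ) le_rfl
    rw [Nat.sub_self, c.sizeUpTo_zero] at h0
    have h1 : (i : ℕ) + 1 + 0 = (i : ℕ) + 1 := rfl
    rw [h1, Aseq_succ, pastSeq_of_gt c p i (by omega)]
    have h2 : (i : ℕ) + 1 - (i : ℕ) - 1 = 0 := by omega
    rw [h2, Finset.sum_range_one]
    omega
  | succ m ih =>
    have h1 : (i : ℕ) + 1 + (m + 1) = ((i : ℕ) + 1 + m) + 1 := rfl
    rw [h1, Aseq_succ, ih, pastSeq_of_gt c p i (by omega)]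
    have h2 : (i : ℕ) + 1 + m + 1 - (i : ℕ) - 1 = m + 1 := by omega
    rw [h2]
    conv_rhs => rw [Finset.sum_range_succ]
    omega

lemma Gpot_eq_tsum {n : ℕ} (c : Composition n) (p : SSeq) (i : Fin c.length) :
    Gpot ρ (pastSeq c p i) = ∑' k : ℕ, ρ (Aseq c p i k) := rfl

section withrho
variable (hρ : Summable fun n : ℕ => ((n : ℝ) + 1) * |ρ (n + 1)|)
include hρ

lemma summable_Aseq {n : ℕ} (c : Composition n) (p : SSeq) (i : Fin c.length) :
    Summable fun k => ρ (Aseq c p i k) :=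
  summable_comp hρ (Aseq_strictMono c p i).injective
    (fun k => le_trans (by omega) (lt_Aseq c p i k))

end withrho

/-- The tail of the interaction seen by block `i`, involving the past. -/
noncomputable def tail (ρ : ℕ → ℝ) {n : ℕ} (c : Composition n) (p : SSeq)
    (i : Fin c.length) : ℝ :=
  ∑' m : ℕ, ρ (Aseq c p i (m + ((i : ℕ) + 1)))

section withrho2
variable (hρ : Summable fun n : ℕ => ((n : ℝ) + 1) * |ρ (n + 1)|)
include hρ

lemma Gpot_split {n : ℕ} (c : Composition n) (p : SSeq) (i : Fin c.length) :
    Gpot ρ (pastSeq c p i)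
      = (∑ k ∈ Finset.range ((i : ℕ) + 1),
          ρ (c.sizeUpTo ((i : ℕ) + 1) - c.sizeUpTo ((i : ℕ) - k)))
        + tail ρ c p i := by
  rw [Gpot_eq_tsum, ← Summable.sum_add_tsum_nat_add ((i : ℕ) + 1) (summable_Aseq hρ c p i)]
  congr 1
  refine Finset.sum_congr rfl fun k hk => ?_
  have hk' : k ≤ (i : ℕ) := by
    have := Finset.mem_range.mp hk; omega
  have := Aseq_add_sizeUpTo c p i k hk'
  congr 1
  omega

lemma abs_tail_le {n : ℕ} (c : Composition n) (p : SSeq) (i : Fin c.length) :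
    |tail ρ c p i| ≤ tailT ρ ((i : ℕ) + 1) := by
  have hmono : StrictMono fun m : ℕ => Aseq c p i (m + ((i : ℕ) + 1)) :=
    fun a b hab => Aseq_strictMono c p i (by omega)
  have hge : ∀ m, ((i : ℕ) + 1) + 1 ≤ Aseq c p i (m + ((i : ℕ) + 1)) := fun m =>
    le_trans (by omega) (lt_Aseq c p i _)
  have h1 : ∀ m, 1 ≤ Aseq c p i (m + ((i : ℕ) + 1)) := fun m => le_trans (by omega) (hge m)
  have habs := summable_abs_comp hρ hmono.injective h1
  calc |tail ρ c p i| ≤ ∑' m : ℕ, |ρ (Aseq c p i (m + ((i : ℕ) + 1)))| := by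
        rw [tail]
        simpa [Real.norm_eq_abs] using
          norm_tsum_le_tsum_norm (f := fun m => ρ (Aseq c p i (m + ((i : ℕ) + 1))))
            (by simpa [Real.norm_eq_abs] using habs)
    _ ≤ tailT ρ ((i : ℕ) + 1) := tsum_abs_comp_le hρ hmono.injective hge

lemma sum_Gpot {n : ℕ} (c : Composition n) (p : SSeq) :
    ∑ i : Fin c.length, Gpot ρ (pastSeq c p i)
      = (∑ a ∈ Finset.range (c.length + 1), ∑ b ∈ Finset.range (c.length + 1),
          if a < b then ρ (c.sizeUpTo b - c.sizeUpTo a) else 0)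
        + ∑ i : Fin c.length, tail ρ c p i := by
  have h1 : ∀ i : Fin c.length, Gpot ρ (pastSeq c p i)
      = (∑ a ∈ Finset.range ((i : ℕ) + 1), ρ (c.sizeUpTo ((i : ℕ) + 1) - c.sizeUpTo a))
        + tail ρ c p i := by
    intro i
    rw [Gpot_split hρ c p i]
    congr 1
    rw [← Finset.sum_range_reflect (fun a => ρ (c.sizeUpTo ((i : ℕ) + 1) - c.sizeUpTo a))
      ((i : ℕ) + 1)]
    exact Finset.sum_congr rfl fun k hk => rfl
  rw [Finset.sum_congr rfl (fun i _ => h1 i), Finset.sum_add_distrib]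
  congr 1
  have hR : (∑ a ∈ Finset.range (c.length + 1), ∑ b ∈ Finset.range (c.length + 1),
        if a < b then ρ (c.sizeUpTo b - c.sizeUpTo a) else 0)
      = ∑ b ∈ Finset.range (c.length + 1), ∑ a ∈ Finset.range b,
          ρ (c.sizeUpTo b - c.sizeUpTo a) := by
    rw [Finset.sum_comm]
    refine Finset.sum_congr rfl fun b hb => ?_
    rw [← Finset.sum_filter]
    refine Finset.sum_congr ?_ (fun _ _ => rfl)
    ext x
    simp only [Finset.mem_filter, Finset.mem_range]
    have := Finset.mem_range.mp hb
    omega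
  rw [hR, Finset.sum_range_succ'
    (fun b => ∑ a ∈ Finset.range b, ρ (c.sizeUpTo b - c.sizeUpTo a)) c.length]
  simp only [Finset.range_zero, Finset.sum_empty, add_zero]
  exact Fin.sum_univ_eq_sum_range
    (fun i => ∑ a ∈ Finset.range (i + 1), ρ (c.sizeUpTo (i + 1) - c.sizeUpTo a)) c.length

end withrho2

end CompLemmas

section Bridge

variable {ρ : ℕ → ℝ}

lemma fin_double {n : ℕ} (c : Composition n) :
    (∑ i : Fin c.length, ∑ j : Fin c.length,
        if (i : ℕ) < (j : ℕ) then
          ρ (c.sizeUpTo ((j : ℕ) + 1) - c.sizeUpTo ((i : ℕ) + 1)) else 0)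
      = ∑ a ∈ Finset.range c.length, ∑ b ∈ Finset.range c.length,
          if a < b then ρ (c.sizeUpTo (b + 1) - c.sizeUpTo (a + 1)) else 0 := by
  calc (∑ i : Fin c.length, ∑ j : Fin c.length,
        if (i : ℕ) < (j : ℕ) then
          ρ (c.sizeUpTo ((j : ℕ) + 1) - c.sizeUpTo ((i : ℕ) + 1)) else 0)
      = ∑ i : Fin c.length, ∑ b ∈ Finset.range c.length,
          if (i : ℕ) < b then ρ (c.sizeUpTo (b + 1) - c.sizeUpTo ((i : ℕ) + 1)) else 0 :=
        Finset.sum_congr rfl fun i _ => Fin.sum_univ_eq_sum_range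
          (fun b => if (i : ℕ) < b then
            ρ (c.sizeUpTo (b + 1) - c.sizeUpTo ((i : ℕ) + 1)) else 0) c.length
    _ = _ := Fin.sum_univ_eq_sum_range
        (fun a => ∑ b ∈ Finset.range c.length,
          if a < b then ρ (c.sizeUpTo (b + 1) - c.sizeUpTo (a + 1)) else 0) c.length

lemma double_eq {n : ℕ} (c : Composition n) :
    (∑ a ∈ Finset.range (c.length + 1), ∑ b ∈ Finset.range (c.length + 1),
        if a < b then ρ (c.sizeUpTo b - c.sizeUpTo a) else 0)
      = (∑ a ∈ Finset.range c.length, ∑ b ∈ Finset.range c.length,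
          if a < b then ρ (c.sizeUpTo (b + 1) - c.sizeUpTo (a + 1)) else 0)
        + ∑ j ∈ Finset.range c.length, ρ (c.sizeUpTo (j + 1)) := by
  rw [Finset.sum_range_succ' (fun a => ∑ b ∈ Finset.range (c.length + 1),
    if a < b then ρ (c.sizeUpTo b - c.sizeUpTo a) else 0) c.length]
  congr 1
  · refine Finset.sum_congr rfl fun a _ => ?_
    rw [Finset.sum_range_succ' (fun b =>
      if a + 1 < b then ρ (c.sizeUpTo b - c.sizeUpTo (a + 1)) else 0) c.length]
    simp [Nat.add_lt_add_iff_right]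
  · rw [Finset.sum_range_succ' (fun b =>
      if 0 < b then ρ (c.sizeUpTo b - c.sizeUpTo 0) else 0) c.length]
    simp [c.sizeUpTo_zero]

lemma sizeUpTo_lt {n : ℕ} (c : Composition n) {a b : ℕ} (hab : a < b) (hb : b ≤ c.length) :
    c.sizeUpTo a < c.sizeUpTo b := by
  have h1 : c.sizeUpTo (a + 1) ≤ c.sizeUpTo b := c.monotone_sizeUpTo hab
  have h2 := c.sizeUpTo_strict_mono (lt_of_lt_of_le hab hb)
  omega

lemma one_le_sizeUpTo {n : ℕ} (c : Composition n) {j : ℕ} (hj : j < c.length) :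
    1 ≤ c.sizeUpTo (j + 1) := by
  have := sizeUpTo_lt c (by omega : 0 < j + 1) hj
  have h0 := c.sizeUpTo_zero
  omega

lemma abs_R_le (hρ : Summable fun n : ℕ => ((n : ℝ) + 1) * |ρ (n + 1)|)
    {n : ℕ} (c : Composition n) :
    |∑ j ∈ Finset.range c.length, ρ (c.sizeUpTo (j + 1))| ≤ S ρ := by
  refine le_trans (Finset.abs_sum_le_sum_abs _ _) (le_trans ?_ (tailT_le_S hρ))
  have hinj : ∀ a ∈ Finset.range c.length, ∀ b ∈ Finset.range c.length,
      c.sizeUpTo (a + 1) - 1 = c.sizeUpTo (b + 1) - 1 → a = b := by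
    intro a ha b hb hab
    rw [Finset.mem_range] at ha hb
    by_contra hne
    rcases Nat.lt_or_ge a b with hl | hg
    · have := sizeUpTo_lt c (by omega : a + 1 < b + 1) hb
      have pa := one_le_sizeUpTo c ha
      omega
    · have hba : b < a := by omega
      have := sizeUpTo_lt c (by omega : b + 1 < a + 1) ha
      have pb := one_le_sizeUpTo c hb
      omega
  have heq : ∑ j ∈ Finset.range c.length, |ρ (c.sizeUpTo (j + 1))|
      = ∑ m ∈ (Finset.range c.length).image (fun j => c.sizeUpTo (j + 1) - 1),
          |ρ (m + 1)| := by
    rw [Finset.sum_image hinj]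
    refine Finset.sum_congr rfl fun j hj => ?_
    have := one_le_sizeUpTo c (Finset.mem_range.mp hj)
    congr 2
    omega
  rw [heq]
  have := Summable.sum_le_tsum (f := fun m : ℕ => |ρ (m + 1)|)
    ((Finset.range c.length).image (fun j => c.sizeUpTo (j + 1) - 1))
    (fun _ _ => abs_nonneg _) (habs hρ)
  exact this

end Bridge
end PWP

/-- Comparison of the modified partition function with the partition function with past, and
convergence of `(1/n) log 𝒵_n^{p̄}` to the annealed free energy. -/
theorem partition_with_past (K ρ : ℕ → ℝ)
    (hKpos : ∀ n : ℕ, 1 ≤ n → 0 < K n)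
    (hKsum : HasSum (fun n : ℕ => K (n + 1)) 1)
    (hρ : Summable fun n : ℕ => ((n : ℝ) + 1) * |ρ (n + 1)|)
    (β h : ℝ) (hβ : 0 ≤ β)
    (Fa : ℝ)
    (hFa : Tendsto (fun n : ℕ => (1 / (n : ℝ)) * Real.log (Zann K ρ β h n))
      atTop (nhds Fa)) :
    (∀ p : SSeq, ∀ n : ℕ, 1 ≤ n →
        Real.exp (-(β ^ 2 * ∑' k : ℕ, ((k : ℝ) + 1) * |ρ (k + 1)|)) * Zpast K ρ β h p n
            ≤ Ztilde K ρ β h n ∧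
          Ztilde K ρ β h n
            ≤ Real.exp (β ^ 2 * ∑' k : ℕ, ((k : ℝ) + 1) * |ρ (k + 1)|) * Zpast K ρ β h p n) ∧
      ∀ p : SSeq,
        Tendsto (fun n : ℕ => (1 / (n : ℝ)) * Real.log (Zpast K ρ β h p n))
          atTop (nhds Fa) := by
  classical
  have hb2 : (0 : ℝ) ≤ β ^ 2 := sq_nonneg β
  have hSnn : 0 ≤ PWP.S ρ := PWP.S_nonneg
  set C : ℝ := β ^ 2 * PWP.S ρ with hCdef
  have hCnn : 0 ≤ C := mul_nonneg hb2 hSnn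
  clear_value C
  have hP : ∀ {m : ℕ} (c : Composition m), 0 < ∏ i : Fin c.length, K (c.blocksFun i) :=
    fun c => Finset.prod_pos fun i _ => hKpos _ (c.one_le_blocksFun i)
  -- positivity of the partition functions
  have hZapos : ∀ m : ℕ, 0 < Zann K ρ β h m := by
    intro m
    have : Nonempty (Composition m) := ⟨Composition.ones m⟩
    refine Finset.sum_pos (fun c _ => ?_) Finset.univ_nonempty
    exact mul_pos (Real.exp_pos _) (hP c)
  have hZtpos : ∀ m : ℕ, 0 < Ztilde K ρ β h m := by
    intro m
    have : Nonempty (Composition m) := ⟨Composition.ones m⟩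
    refine Finset.sum_pos (fun c _ => ?_) Finset.univ_nonempty
    exact mul_pos (Real.exp_pos _) (hP c)
  -- the Zpast term rewritten through the Ztilde term
  have hterm : ∀ {m : ℕ} (p : SSeq) (c : Composition m),
      (∏ i : Fin c.length,
          Real.exp (h + β ^ 2 / 2 + β ^ 2 * Gpot ρ (pastSeq c p i)) * K (c.blocksFun i))
        = Real.exp (β ^ 2 * ∑ i : Fin c.length, PWP.tail ρ c p i)
          * (Real.exp ((c.length : ℝ) * (h + β ^ 2 / 2)
              + β ^ 2 * ∑ i ∈ Finset.range (c.length + 1), ∑ j ∈ Finset.range (c.length + 1),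
                  if i < j then ρ (c.sizeUpTo j - c.sizeUpTo i) else 0)
            * ∏ i : Fin c.length, K (c.blocksFun i)) := by
    intro m p c
    rw [Finset.prod_mul_distrib, ← Real.exp_sum, ← mul_assoc, ← Real.exp_add]
    congr 2
    rw [Finset.sum_add_distrib, Finset.sum_const, Finset.card_univ, Fintype.card_fin,
      nsmul_eq_mul, ← Finset.mul_sum, PWP.sum_Gpot hρ c p]
    ring
  -- the Ztilde term rewritten through the annealed weight
  have hterm2 : ∀ {m : ℕ} (c : Composition m),
      Real.exp ((c.length : ℝ) * (h + β ^ 2 / 2)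
          + β ^ 2 * ∑ i ∈ Finset.range (c.length + 1), ∑ j ∈ Finset.range (c.length + 1),
              if i < j then ρ (c.sizeUpTo j - c.sizeUpTo i) else 0)
        * ∏ i : Fin c.length, K (c.blocksFun i)
        = Real.exp (β ^ 2 * ∑ j ∈ Finset.range c.length, ρ (c.sizeUpTo (j + 1)))
          * annWeight K ρ β h c := by
    intro m c
    rw [annWeight, ← mul_assoc, ← Real.exp_add]
    congr 2
    rw [PWP.double_eq c, PWP.fin_double c]
    ring
  -- bound on the tail sums
  have hDle : ∀ {m : ℕ} (p : SSeq) (c : Composition m),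
      |β ^ 2 * ∑ i : Fin c.length, PWP.tail ρ c p i| ≤ C := by
    intro m p c
    rw [hCdef, abs_mul, abs_of_nonneg hb2]
    refine mul_le_mul_of_nonneg_left ?_ hb2
    refine le_trans (Finset.abs_sum_le_sum_abs _ _) ?_
    refine le_trans (Finset.sum_le_sum fun i _ => PWP.abs_tail_le hρ c p i) ?_
    rw [Fin.sum_univ_eq_sum_range (fun i => PWP.tailT ρ (i + 1)) c.length]
    exact PWP.sum_tailT_le hρ c.length
  have hRle : ∀ {m : ℕ} (c : Composition m),
      |β ^ 2 * ∑ j ∈ Finset.range c.length, ρ (c.sizeUpTo (j + 1))| ≤ C := by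
    intro m c
    rw [hCdef, abs_mul, abs_of_nonneg hb2]
    exact mul_le_mul_of_nonneg_left (PWP.abs_R_le hρ c) hb2
  -- generic comparison principle: if Y = exp(d) * X with |d| ≤ C and X > 0 then ...
  have hgen : ∀ (d X : ℝ), 0 < X → |d| ≤ C →
      Real.exp (-C) * (Real.exp d * X) ≤ X ∧ X ≤ Real.exp C * (Real.exp d * X) := by
    intro d X hX hd
    obtain ⟨hd1, hd2⟩ := abs_le.mp hd
    constructor
    · rw [← mul_assoc, ← Real.exp_add]
      refine le_trans (mul_le_mul_of_nonneg_right ?_ (le_of_lt hX)) (le_of_eq (one_mul X))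
      rw [← Real.exp_zero]
      exact Real.exp_le_exp.mpr (by linarith)
    · rw [← mul_assoc, ← Real.exp_add]
      refine le_mul_of_one_le_left (le_of_lt hX) ?_
      rw [← Real.exp_zero]
      exact Real.exp_le_exp.mpr (by linarith)
  -- comparison of Zpast and Ztilde
  have hZcomp : ∀ (p : SSeq) (m : ℕ),
      Real.exp (-C) * Zpast K ρ β h p m ≤ Ztilde K ρ β h m ∧
        Ztilde K ρ β h m ≤ Real.exp C * Zpast K ρ β h p m := by
    intro p m
    constructor
    · rw [Zpast, Ztilde, Finset.mul_sum]
      refine Finset.sum_le_sum fun c _ => ?_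
      rw [hterm p c]
      exact (hgen _ _ (mul_pos (Real.exp_pos _) (hP c)) (hDle p c)).1
    · rw [Zpast, Ztilde, Finset.mul_sum]
      refine Finset.sum_le_sum fun c _ => ?_
      rw [hterm p c]
      exact (hgen _ _ (mul_pos (Real.exp_pos _) (hP c)) (hDle p c)).2
  -- comparison of Ztilde and Zann
  have hZacomp : ∀ m : ℕ,
      Real.exp (-C) * Ztilde K ρ β h m ≤ Zann K ρ β h m ∧
        Zann K ρ β h m ≤ Real.exp C * Ztilde K ρ β h m := by
    intro m
    constructor
    · rw [Zann, Ztilde, Finset.mul_sum]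
      refine Finset.sum_le_sum fun c _ => ?_
      rw [hterm2 c]
      have hwpos : 0 < annWeight K ρ β h c := mul_pos (Real.exp_pos _) (hP c)
      exact (hgen _ _ hwpos (hRle c)).1
    · rw [Zann, Ztilde, Finset.mul_sum]
      refine Finset.sum_le_sum fun c _ => ?_
      rw [hterm2 c]
      have hwpos : 0 < annWeight K ρ β h c := mul_pos (Real.exp_pos _) (hP c)
      exact (hgen _ _ hwpos (hRle c)).2
  -- combination: comparison of Zpast and Zann
  have hflip : ∀ x y : ℝ, Real.exp (-C) * x ≤ y → x ≤ Real.exp C * y := by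
    intro x y hxy
    have hmul := mul_le_mul_of_nonneg_left hxy (Real.exp_pos C).le
    calc x = (Real.exp C * Real.exp (-C)) * x := by
          rw [← Real.exp_add C (-C), show C + -C = 0 by ring, Real.exp_zero, one_mul]
      _ = Real.exp C * (Real.exp (-C) * x) := by ring
      _ ≤ Real.exp C * y := hmul
  have hfinal : ∀ (p : SSeq) (m : ℕ),
      Real.exp (-(2 * C)) * Zann K ρ β h m ≤ Zpast K ρ β h p m ∧
        Zpast K ρ β h p m ≤ Real.exp (2 * C) * Zann K ρ β h m := by
    intro p m
    obtain ⟨h1, h2⟩ := hZcomp p m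
    obtain ⟨h3, h4⟩ := hZacomp m
    have hee : Real.exp (-(2 * C)) * (Real.exp C * Real.exp C) = 1 := by
      rw [← Real.exp_add C C, ← Real.exp_add (-(2 * C)) (C + C),
        show -(2 * C) + (C + C) = 0 by ring, Real.exp_zero]
    have hee2 : Real.exp C * Real.exp C = Real.exp (2 * C) := by
      rw [← Real.exp_add C C, show C + C = 2 * C by ring]
    constructor
    · have h5 : Zann K ρ β h m ≤ Real.exp C * (Real.exp C * Zpast K ρ β h p m) :=
        le_trans h4 (mul_le_mul_of_nonneg_left h2 (Real.exp_pos C).le)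
      calc Real.exp (-(2 * C)) * Zann K ρ β h m
          ≤ Real.exp (-(2 * C)) * (Real.exp C * (Real.exp C * Zpast K ρ β h p m)) :=
            mul_le_mul_of_nonneg_left h5 (Real.exp_pos _).le
        _ = (Real.exp (-(2 * C)) * (Real.exp C * Real.exp C)) * Zpast K ρ β h p m := by
            ring
        _ = Zpast K ρ β h p m := by rw [hee, one_mul]
    · have h1' := hflip _ _ h1
      have h3' := hflip _ _ h3
      calc Zpast K ρ β h p m ≤ Real.exp C * Ztilde K ρ β h m := h1'
        _ ≤ Real.exp C * (Real.exp C * Zann K ρ β h m) :=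
            mul_le_mul_of_nonneg_left h3' (Real.exp_pos C).le
        _ = (Real.exp C * Real.exp C) * Zann K ρ β h m := by ring
        _ = Real.exp (2 * C) * Zann K ρ β h m := by rw [hee2]
  have hZppos : ∀ (p : SSeq) (m : ℕ), 0 < Zpast K ρ β h p m := fun p m =>
    lt_of_lt_of_le (mul_pos (Real.exp_pos _) (hZapos m)) (hfinal p m).1
  -- logarithmic bounds
  have hlog : ∀ (p : SSeq) (m : ℕ),
      Real.log (Zann K ρ β h m) - 2 * C ≤ Real.log (Zpast K ρ β h p m) ∧
        Real.log (Zpast K ρ β h p m) ≤ Real.log (Zann K ρ β h m) + 2 * C := by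
    intro p m
    obtain ⟨h1, h2⟩ := hfinal p m
    constructor
    · have := Real.log_le_log (mul_pos (Real.exp_pos _) (hZapos m)) h1
      rw [Real.log_mul (Real.exp_ne_zero _) (ne_of_gt (hZapos m)), Real.log_exp] at this
      linarith
    · have := Real.log_le_log (hZppos p m) h2
      rw [Real.log_mul (Real.exp_ne_zero _) (ne_of_gt (hZapos m)), Real.log_exp] at this
      linarith
  constructor
  · intro p n _
    have hc := hZcomp p n
    rw [hCdef] at hc
    exact hc
  intro p
  -- convergence
  have h2C : Tendsto (fun m : ℕ => (1 / (m : ℝ)) * (2 * C)) atTop (nhds 0) := by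
    simpa using tendsto_one_div_atTop_nhds_zero_nat.mul_const (2 * C)
  refine tendsto_of_tendsto_of_tendsto_of_le_of_le
    (g := fun m : ℕ => (1 / (m : ℝ)) * Real.log (Zann K ρ β h m) - (1 / (m : ℝ)) * (2 * C))
    (h := fun m : ℕ => (1 / (m : ℝ)) * Real.log (Zann K ρ β h m) + (1 / (m : ℝ)) * (2 * C))
    (by simpa using hFa.sub h2C) (by simpa using hFa.add h2C) ?_ ?_
  · intro m
    have hm : (0 : ℝ) ≤ 1 / (m : ℝ) := by positivity
    have := mul_le_mul_of_nonneg_left (hlog p m).1 hm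
    rw [mul_sub] at this
    exact this
  · intro m
    have hm : (0 : ℝ) ≤ 1 / (m : ℝ) := by positivity
    have := mul_le_mul_of_nonneg_left (hlog p m).2 hm
    rw [mul_add] at this
    exact this
end

section
/- Suppose Σ_{n≥1} |ρ(n)| < ∞. For q ≥ 1 let ρ^{(q)}(n) = ρ(n) for n ≤ q and ρ^{(q)}(n) = 0 for n > q, and let Z^{(q)}_n, F^{a,q} and h_c^{a,q} denote the annealed partition function, free energy and critical point associated with ρ^{(q)}. Set ε_q = β² Σ_{k ≥ q+1} |ρ(k)|. Then for every β ≥ 0, h ∈ ℝ and n ≥ 1: Z^{(q)}_n(β, h − ε_q) ≤ Z_n(β,h) ≤ Z^{(q)}_n(β, h + ε_q). Consequently F^{a,q}(β, h − ε_q) ≤ F^a(β,h) ≤ F^{a,q}(β, h + ε_q) for all h, and h_c^{a,q}(β) − ε_q ≤ h_c^a(β) ≤ h_c^{a,q}(β) + ε_q. -/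
open Real Filter Finset

/-! ### Auxiliary definitions and lemmas -/

noncomputable def corrSum (ρ : ℕ → ℝ) {m : ℕ} (c : Composition m) : ℝ :=
  ∑ i : Fin c.length, ∑ j : Fin c.length,
    if (i : ℕ) < (j : ℕ) then
      ρ (c.sizeUpTo ((j : ℕ) + 1) - c.sizeUpTo ((i : ℕ) + 1)) else 0

lemma sizeUpTo_lt {m : ℕ} (c : Composition m) {i j : ℕ} (hij : i < j) (hj : j ≤ c.length) :
    c.sizeUpTo i < c.sizeUpTo j :=
  lt_of_lt_of_le (c.sizeUpTo_strict_mono (lt_of_lt_of_le hij hj))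
    (c.monotone_sizeUpTo hij)

lemma shift_summable (ρ : ℕ → ℝ) (hρ : Summable fun n : ℕ => |ρ (n + 1)|) (q : ℕ) :
    Summable fun k : ℕ => |ρ (q + 1 + k)| := by
  have h1 : Summable fun k : ℕ => |ρ (k + q + 1)| := (summable_nat_add_iff q).2 hρ
  exact h1.congr fun k => by congr 2; omega

lemma row_bound (ρ : ℕ → ℝ) (hρ : Summable fun n : ℕ => |ρ (n + 1)|) (q : ℕ)
    {m : ℕ} (c : Composition m) (i : Fin c.length) :
    (∑ j : Fin c.length,
      if (i : ℕ) < (j : ℕ) ∧ q < c.sizeUpTo ((j : ℕ) + 1) - c.sizeUpTo ((i : ℕ) + 1)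
      then |ρ (c.sizeUpTo ((j : ℕ) + 1) - c.sizeUpTo ((i : ℕ) + 1))| else 0)
    ≤ ∑' k : ℕ, |ρ (q + 1 + k)| := by
  set D : Fin c.length → ℕ := fun j => c.sizeUpTo ((j : ℕ) + 1) - c.sizeUpTo ((i : ℕ) + 1)
    with hD
  set s : Finset (Fin c.length) :=
    Finset.univ.filter (fun j => (i : ℕ) < (j : ℕ) ∧ q < D j) with hs
  have hDlt : ∀ {j₁ j₂ : Fin c.length}, (i : ℕ) < (j₁ : ℕ) → (j₁ : ℕ) < (j₂ : ℕ) →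
      D j₁ < D j₂ := by
    intro j₁ j₂ h1 h2
    have hle : c.sizeUpTo ((i : ℕ) + 1) ≤ c.sizeUpTo ((j₁ : ℕ) + 1) :=
      (sizeUpTo_lt c (by omega) (by omega : (j₁ : ℕ) + 1 ≤ c.length)).le
    have hlt : c.sizeUpTo ((j₁ : ℕ) + 1) < c.sizeUpTo ((j₂ : ℕ) + 1) :=
      sizeUpTo_lt c (by omega) (by omega : (j₂ : ℕ) + 1 ≤ c.length)
    exact Nat.sub_lt_sub_right hle hlt
  have step1 : (∑ j : Fin c.length,
      if (i : ℕ) < (j : ℕ) ∧ q < D j then |ρ (D j)| else 0) = ∑ j ∈ s, |ρ (D j)| := by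
    rw [hs, Finset.sum_filter]
  have step2 : ∑ j ∈ s, |ρ (D j)| = ∑ j ∈ s, |ρ (q + 1 + (D j - (q + 1)))| := by
    apply Finset.sum_congr rfl
    intro j hj
    rw [hs, Finset.mem_filter] at hj
    congr 2
    omega
  have hinj : ∀ x ∈ s, ∀ y ∈ s, D x - (q + 1) = D y - (q + 1) → x = y := by
    intro x hx y hy hxy
    rw [hs, Finset.mem_filter] at hx hy
    by_contra hne
    rcases lt_trichotomy (x : ℕ) (y : ℕ) with h | h | h
    · have := hDlt hx.2.1 h; omega
    · exact hne (Fin.ext h)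
    · have := hDlt hy.2.1 h; omega
  have step3 : ∑ j ∈ s, |ρ (q + 1 + (D j - (q + 1)))|
      = ∑ t ∈ s.image (fun j => D j - (q + 1)), |ρ (q + 1 + t)| :=
    (Finset.sum_image (f := fun t => |ρ (q + 1 + t)|) hinj).symm
  rw [step1, step2, step3]
  exact Summable.sum_le_tsum _ (fun t _ => abs_nonneg _) (shift_summable ρ hρ q)

lemma corr_diff (ρ : ℕ → ℝ) (hρ : Summable fun n : ℕ => |ρ (n + 1)|) (q : ℕ)
    {m : ℕ} (c : Composition m) :
    |corrSum ρ c - corrSum (fun k => if k ≤ q then ρ k else 0) c|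
      ≤ (c.length : ℝ) * ∑' k : ℕ, |ρ (q + 1 + k)| := by
  rw [corrSum, corrSum, ← Finset.sum_sub_distrib]
  refine le_trans (Finset.abs_sum_le_sum_abs _ _) ?_
  have hrow : ∀ i : Fin c.length,
      |(∑ j : Fin c.length, if (i : ℕ) < (j : ℕ) then
          ρ (c.sizeUpTo ((j : ℕ) + 1) - c.sizeUpTo ((i : ℕ) + 1)) else 0)
        - ∑ j : Fin c.length, if (i : ℕ) < (j : ℕ) then
          (if c.sizeUpTo ((j : ℕ) + 1) - c.sizeUpTo ((i : ℕ) + 1) ≤ q then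
            ρ (c.sizeUpTo ((j : ℕ) + 1) - c.sizeUpTo ((i : ℕ) + 1)) else 0) else 0|
        ≤ ∑' k : ℕ, |ρ (q + 1 + k)| := by
    intro i
    rw [← Finset.sum_sub_distrib]
    refine le_trans (Finset.abs_sum_le_sum_abs _ _) (le_trans (le_of_eq ?_) (row_bound ρ hρ q c i))
    refine Finset.sum_congr rfl fun j _ => ?_
    by_cases h1 : (i : ℕ) < (j : ℕ)
    · by_cases h2 : c.sizeUpTo ((j : ℕ) + 1) - c.sizeUpTo ((i : ℕ) + 1) ≤ q
      · simp [h1, h2, Nat.not_lt.2 h2]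
      · simp [h1, h2, Nat.lt_of_not_le h2]
    · simp [h1]
  calc ∑ i : Fin c.length, _ ≤ ∑ _i : Fin c.length, ∑' k : ℕ, |ρ (q + 1 + k)| :=
      Finset.sum_le_sum fun i _ => hrow i
    _ = (c.length : ℝ) * ∑' k : ℕ, |ρ (q + 1 + k)| := by
      rw [Finset.sum_const, nsmul_eq_mul, Finset.card_univ, Fintype.card_fin]

lemma annWeight_eq (K ρ : ℕ → ℝ) (β h : ℝ) {m : ℕ} (c : Composition m) :
    annWeight K ρ β h c
      = Real.exp ((c.length : ℝ) * (h + β ^ 2 / 2) + β ^ 2 * corrSum ρ c)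
        * ∏ i : Fin c.length, K (c.blocksFun i) := rfl

lemma prodK_pos (K : ℕ → ℝ) (hK : ∀ n : ℕ, 1 ≤ n → 0 < K n) {m : ℕ} (c : Composition m) :
    0 < ∏ i : Fin c.length, K (c.blocksFun i) :=
  Finset.prod_pos fun i _ => hK _ (c.one_le_blocksFun i)

lemma annWeight_pos (K ρ : ℕ → ℝ) (hK : ∀ n : ℕ, 1 ≤ n → 0 < K n) (β h : ℝ)
    {m : ℕ} (c : Composition m) : 0 < annWeight K ρ β h c :=
  mul_pos (Real.exp_pos _) (prodK_pos K hK c)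

lemma Zann_pos (K ρ : ℕ → ℝ) (hK : ∀ n : ℕ, 1 ≤ n → 0 < K n) (β h : ℝ) (n : ℕ) :
    0 < Zann K ρ β h n := by
  have : Nonempty (Composition n) := ⟨Composition.ones n⟩
  exact Finset.sum_pos (fun c _ => annWeight_pos K ρ hK β h c) Finset.univ_nonempty

lemma Zann_mono (K ρ : ℕ → ℝ) (hK : ∀ n : ℕ, 1 ≤ n → 0 < K n) (β : ℝ) {h h' : ℝ}
    (hh : h ≤ h') (n : ℕ) : Zann K ρ β h n ≤ Zann K ρ β h' n := by
  refine Finset.sum_le_sum fun c _ => ?_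
  rw [annWeight_eq, annWeight_eq]
  have hc : (0:ℝ) ≤ (c.length : ℝ) := Nat.cast_nonneg _
  exact mul_le_mul_of_nonneg_right (Real.exp_le_exp.2 (by nlinarith)) (prodK_pos K hK c).le

lemma Zann_lip (K ρ : ℕ → ℝ) (hK : ∀ n : ℕ, 1 ≤ n → 0 < K n) (β : ℝ) {h h' : ℝ}
    (hh : h ≤ h') (n : ℕ) :
    Zann K ρ β h' n ≤ Real.exp ((n : ℝ) * (h' - h)) * Zann K ρ β h n := by
  rw [Zann, Zann, Finset.mul_sum]
  refine Finset.sum_le_sum fun c _ => ?_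
  rw [annWeight_eq, annWeight_eq, ← mul_assoc, ← Real.exp_add]
  refine mul_le_mul_of_nonneg_right (Real.exp_le_exp.2 ?_) (prodK_pos K hK c).le
  have hc : (c.length : ℝ) ≤ (n : ℝ) := Nat.cast_le.2 c.length_le
  have hc0 : (0:ℝ) ≤ (c.length : ℝ) := Nat.cast_nonneg _
  nlinarith

lemma expo_comp (ρ : ℕ → ℝ) (q : ℕ) (β h : ℝ)
    {m : ℕ} (c : Composition m)
    (hcd : |corrSum ρ c - corrSum (fun k => if k ≤ q then ρ k else 0) c|
      ≤ (c.length : ℝ) * ∑' k : ℕ, |ρ (q + 1 + k)|) :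
    ((c.length : ℝ) * ((h - β ^ 2 * ∑' k : ℕ, |ρ (q + 1 + k)|) + β ^ 2 / 2)
        + β ^ 2 * corrSum (fun k => if k ≤ q then ρ k else 0) c
      ≤ (c.length : ℝ) * (h + β ^ 2 / 2) + β ^ 2 * corrSum ρ c) ∧
    ((c.length : ℝ) * (h + β ^ 2 / 2) + β ^ 2 * corrSum ρ c
      ≤ (c.length : ℝ) * ((h + β ^ 2 * ∑' k : ℕ, |ρ (q + 1 + k)|) + β ^ 2 / 2)
        + β ^ 2 * corrSum (fun k => if k ≤ q then ρ k else 0) c) := by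
  have hb : (0:ℝ) ≤ β ^ 2 := sq_nonneg β
  have h1 := abs_le.1 hcd
  constructor <;> nlinarith [h1.1, h1.2]

lemma lim_le {a b : ℕ → ℝ} {A B : ℝ}
    (ha : Tendsto a atTop (nhds A)) (hb : Tendsto b atTop (nhds B))
    (h : ∀ n : ℕ, 1 ≤ n → a n ≤ b n) : A ≤ B :=
  le_of_tendsto_of_tendsto ha hb (eventually_atTop.2 ⟨1, h⟩)

lemma cont_of_mono_lip {f : ℝ → ℝ} (hm : Monotone f)
    (hl : ∀ x y : ℝ, x ≤ y → f y ≤ f x + (y - x)) : Continuous f := by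
  have : LipschitzWith 1 f := by
    refine LipschitzWith.of_dist_le_mul fun x y => ?_
    rw [Real.dist_eq, Real.dist_eq, NNReal.coe_one, one_mul]
    rcases le_total x y with h | h
    · rw [abs_of_nonpos (by linarith [hm h] : f x - f y ≤ 0), abs_of_nonpos (by linarith)]
      have := hl x y h; linarith
    · rw [abs_of_nonneg (by linarith [hm h] : 0 ≤ f x - f y), abs_of_nonneg (by linarith)]
      have := hl y x h; linarith
  exact this.continuous

lemma sSup_zero_le (f g : ℝ → ℝ) (hfc : Continuous f) (hgc : Continuous g)
    (hfm : Monotone f) (hgm : Monotone g) (ε : ℝ) (hε : 0 ≤ ε)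
    (h1 : ∀ h : ℝ, g (h - ε) ≤ f h) (h2 : ∀ h : ℝ, f h ≤ g (h + ε)) :
    sSup {h : ℝ | f h = 0} ≤ sSup {h : ℝ | g h = 0} + ε := by
  set A := {h : ℝ | f h = 0} with hA
  set B := {h : ℝ | g h = 0} with hB
  have key : ∀ a : ℝ, f a = 0 → ∃ b, b ∈ Set.Icc (a - ε) (a + ε) ∧ g b = 0 := by
    intro a ha
    have hg1 : g (a - ε) ≤ 0 := ha ▸ h1 a
    have hg2 : (0:ℝ) ≤ g (a + ε) := ha ▸ h2 a
    obtain ⟨b, hb, hb0⟩ := intermediate_value_Icc (by linarith : a - ε ≤ a + ε)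
      hgc.continuousOn ⟨hg1, hg2⟩
    exact ⟨b, hb, hb0⟩
  by_cases hAne : A.Nonempty
  · by_cases hBb : BddAbove B
    · have hAb : BddAbove A := by
        obtain ⟨M, hM⟩ := hBb
        refine ⟨M + ε, fun a ha => ?_⟩
        obtain ⟨b, hb, hb0⟩ := key a ha
        have : b ≤ M := hM hb0
        have := hb.1
        linarith
      refine csSup_le hAne fun a ha => ?_
      obtain ⟨b, hb, hb0⟩ := key a ha
      have : b ≤ sSup B := le_csSup hBb hb0
      linarith [hb.1]
    · have hfle : ∀ x : ℝ, f x ≤ 0 := by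
        intro x
        obtain ⟨b, hbB, hbx⟩ := not_bddAbove_iff.1 hBb (x + ε)
        calc f x ≤ g (x + ε) := h2 x
          _ ≤ g b := hgm hbx.le
          _ = 0 := hbB
      obtain ⟨a, ha⟩ := hAne
      have hAub : ¬BddAbove A := by
        rw [not_bddAbove_iff]
        intro M
        refine ⟨max (M + 1) a, le_antisymm (hfle _) ?_,
          lt_of_lt_of_le (lt_add_one M) (le_max_left _ _)⟩
        calc (0:ℝ) = f a := ha.symm
          _ ≤ f (max (M + 1) a) := hfm (le_max_right _ _)
      rw [Real.sSup_of_not_bddAbove hAub, Real.sSup_of_not_bddAbove hBb]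
      linarith
  · have hBne : ¬B.Nonempty := by
      rintro ⟨b, hb⟩
      have hf1 : f (b - ε) ≤ 0 := le_of_le_of_eq (h2 (b - ε)) (by rwa [sub_add_cancel])
      have hf2 : (0:ℝ) ≤ f (b + ε) := le_of_eq_of_le (id (Eq.symm hb)) (by
        have := h1 (b + ε); rwa [add_sub_cancel_right] at this)
      obtain ⟨x, _, hx0⟩ := intermediate_value_Icc (by linarith : b - ε ≤ b + ε)
        hfc.continuousOn ⟨hf1, hf2⟩
      exact hAne ⟨x, hx0⟩
    rw [Set.not_nonempty_iff_eq_empty] at hAne hBne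
    rw [hAne, hBne, Real.sSup_empty]
    linarith

/-- Comparison with the model with truncated correlations `ρ^{(q)}(n) = ρ(n) 1_{n ≤ q}`:
bounds on partition functions, free energies and critical points, with
`ε_q = β² Σ_{k>q} |ρ(k)|`. -/
theorem truncation_comparison (K ρ : ℕ → ℝ)
    (hKpos : ∀ n : ℕ, 1 ≤ n → 0 < K n)
    (hKsum : HasSum (fun n : ℕ => K (n + 1)) 1)
    (hρ : Summable fun n : ℕ => |ρ (n + 1)|)
    (β : ℝ) (hβ : 0 ≤ β)
    (Fa : ℝ → ℝ)
    (hFa : ∀ h : ℝ, Tendsto (fun n : ℕ => (1 / (n : ℝ)) * Real.log (Zann K ρ β h n))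
      atTop (nhds (Fa h)))
    (Faq : ℕ → ℝ → ℝ)
    (hFaq : ∀ q : ℕ, 1 ≤ q → ∀ h : ℝ,
      Tendsto (fun n : ℕ =>
          (1 / (n : ℝ)) * Real.log (Zann K (fun k => if k ≤ q then ρ k else 0) β h n))
        atTop (nhds (Faq q h))) :
    ∀ q : ℕ, 1 ≤ q →
      (∀ h : ℝ, ∀ n : ℕ, 1 ≤ n →
        Zann K (fun k => if k ≤ q then ρ k else 0) β
            (h - β ^ 2 * ∑' k : ℕ, |ρ (q + 1 + k)|) n ≤ Zann K ρ β h n ∧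
          Zann K ρ β h n ≤ Zann K (fun k => if k ≤ q then ρ k else 0) β
            (h + β ^ 2 * ∑' k : ℕ, |ρ (q + 1 + k)|) n) ∧
      (∀ h : ℝ,
        Faq q (h - β ^ 2 * ∑' k : ℕ, |ρ (q + 1 + k)|) ≤ Fa h ∧
          Fa h ≤ Faq q (h + β ^ 2 * ∑' k : ℕ, |ρ (q + 1 + k)|)) ∧
      sSup {h : ℝ | Faq q h = 0} - β ^ 2 * ∑' k : ℕ, |ρ (q + 1 + k)|
          ≤ sSup {h : ℝ | Fa h = 0} ∧
        sSup {h : ℝ | Fa h = 0}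
          ≤ sSup {h : ℝ | Faq q h = 0} + β ^ 2 * ∑' k : ℕ, |ρ (q + 1 + k)| := by
  intro q hq
  set ρq : ℕ → ℝ := fun k => if k ≤ q then ρ k else 0 with hρq
  set ε : ℝ := β ^ 2 * ∑' k : ℕ, |ρ (q + 1 + k)| with hε
  have hε0 : 0 ≤ ε := mul_nonneg (sq_nonneg β) (tsum_nonneg fun k => abs_nonneg _)
  -- partition function comparison (for all n)
  have hZ1 : ∀ (h : ℝ) (n : ℕ), Zann K ρq β (h - ε) n ≤ Zann K ρ β h n := by
    intro h n
    refine Finset.sum_le_sum fun c _ => ?_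
    rw [annWeight_eq, annWeight_eq]
    exact mul_le_mul_of_nonneg_right
      (Real.exp_le_exp.2 (expo_comp ρ q β h c (corr_diff ρ hρ q c)).1)
      (prodK_pos K hKpos c).le
  have hZ2 : ∀ (h : ℝ) (n : ℕ), Zann K ρ β h n ≤ Zann K ρq β (h + ε) n := by
    intro h n
    refine Finset.sum_le_sum fun c _ => ?_
    rw [annWeight_eq, annWeight_eq]
    exact mul_le_mul_of_nonneg_right
      (Real.exp_le_exp.2 (expo_comp ρ q β h c (corr_diff ρ hρ q c)).2)
      (prodK_pos K hKpos c).le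
  -- free energy comparison
  have hF1 : ∀ h : ℝ, Faq q (h - ε) ≤ Fa h := by
    intro h
    refine lim_le (hFaq q hq (h - ε)) (hFa h) fun n hn => ?_
    exact mul_le_mul_of_nonneg_left
      (Real.log_le_log (Zann_pos K ρq hKpos β (h - ε) n) (hZ1 h n))
      (by positivity)
  have hF2 : ∀ h : ℝ, Fa h ≤ Faq q (h + ε) := by
    intro h
    refine lim_le (hFa h) (hFaq q hq (h + ε)) fun n hn => ?_
    exact mul_le_mul_of_nonneg_left
      (Real.log_le_log (Zann_pos K ρ hKpos β h n) (hZ2 h n))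
      (by positivity)
  -- monotonicity and Lipschitz bounds for the free energies
  have hmono : ∀ (σ : ℕ → ℝ) (F : ℝ → ℝ),
      (∀ h : ℝ, Tendsto (fun n : ℕ => (1 / (n : ℝ)) * Real.log (Zann K σ β h n))
        atTop (nhds (F h))) → Monotone F := by
    intro σ F hF x y hxy
    refine lim_le (hF x) (hF y) fun n hn => ?_
    exact mul_le_mul_of_nonneg_left
      (Real.log_le_log (Zann_pos K σ hKpos β x n) (Zann_mono K σ hKpos β hxy n))
      (by positivity)
  have hlip : ∀ (σ : ℕ → ℝ) (F : ℝ → ℝ),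
      (∀ h : ℝ, Tendsto (fun n : ℕ => (1 / (n : ℝ)) * Real.log (Zann K σ β h n))
        atTop (nhds (F h))) → ∀ x y : ℝ, x ≤ y → F y ≤ F x + (y - x) := by
    intro σ F hF x y hxy
    have key : ∀ n : ℕ, 1 ≤ n →
        (1 / (n : ℝ)) * Real.log (Zann K σ β y n)
          ≤ (y - x) + (1 / (n : ℝ)) * Real.log (Zann K σ β x n) := by
      intro n hn
      have hn0 : (0:ℝ) < (n : ℝ) := by exact_mod_cast hn
      have hZx : 0 < Zann K σ β x n := Zann_pos K σ hKpos β x n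
      have h1 : Real.log (Zann K σ β y n)
          ≤ (n : ℝ) * (y - x) + Real.log (Zann K σ β x n) := by
        have := Real.log_le_log (Zann_pos K σ hKpos β y n) (Zann_lip K σ hKpos β hxy n)
        rwa [Real.log_mul (Real.exp_ne_zero _) hZx.ne', Real.log_exp] at this
      have h2 : (1 / (n : ℝ)) * Real.log (Zann K σ β y n)
          ≤ (1 / (n : ℝ)) * ((n : ℝ) * (y - x) + Real.log (Zann K σ β x n)) :=
        mul_le_mul_of_nonneg_left h1 (by positivity)
      calc (1 / (n : ℝ)) * Real.log (Zann K σ β y n)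
          ≤ (1 / (n : ℝ)) * ((n : ℝ) * (y - x) + Real.log (Zann K σ β x n)) := h2
        _ = (y - x) + (1 / (n : ℝ)) * Real.log (Zann K σ β x n) := by
            field_simp
    have := lim_le (hF y) (tendsto_const_nhds.add (hF x)) key
    linarith
  have hFam : Monotone Fa := hmono ρ Fa hFa
  have hFaqm : Monotone (Faq q) := hmono ρq (Faq q) (hFaq q hq)
  have hFac : Continuous Fa := cont_of_mono_lip hFam (hlip ρ Fa hFa)
  have hFaqc : Continuous (Faq q) := cont_of_mono_lip hFaqm (hlip ρq (Faq q) (hFaq q hq))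
  refine ⟨fun h n _ => ⟨hZ1 h n, hZ2 h n⟩, fun h => ⟨hF1 h, hF2 h⟩, ?_, ?_⟩
  · have := sSup_zero_le (Faq q) Fa hFaqc hFac hFaqm hFam ε hε0
      (fun h => le_of_le_of_eq (hF2 (h - ε)) (by rw [sub_add_cancel]))
      (fun h => by have := hF1 (h + ε); rwa [add_sub_cancel_right] at this)
    linarith
  · exact sSup_zero_le Fa (Faq q) hFac hFaqc hFam hFaqm ε hε0 hF1 hF2
end
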